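/- arXiv:2308.09967 — 4 statements merged into one kernel-verified Lean document; each statement's English description precedes it below -/
import Mathlib

section
/- Let n ≥ 2 and let K_n be the complete graph on vertices {1,...,n}. Then the n-th symbolic power of its edge ideal satisfies I(K_n)^{(n)} : (x_1 x_2 ⋯ x_n) = I(K_n). -/
open MvPolynomial

/-- The depth of a module over `MvPolynomial V k` with respect to the maximal homogeneous
ideal `(X v : v ∈ V)`, defined as the least `i` with nonvanishing local cohomology. -/
noncomputable def polyDepth (k V : Type) [Field k]
    (M : Type) [AddCommGroup M] [Module (MvPolynomial V k) M] : ℕ :=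
  sInf {i : ℕ |
    Nontrivial ((localCohomology (Ideal.span (Set.range (X : V → MvPolynomial V k))) i).obj
      (ModuleCat.of (MvPolynomial V k) M))}

/-- depth of `S/I`. -/
noncomputable def depthQ (k V : Type) [Field k] (I : Ideal (MvPolynomial V k)) : ℕ :=
  polyDepth k V (MvPolynomial V k ⧸ I)

/-- The edge ideal of a simple graph `G`: generated by the `X i * X j` over edges `{i,j}`. -/
noncomputable def edgeIdeal (k : Type) [Field k] {V : Type} (G : SimpleGraph V) :
    Ideal (MvPolynomial V k) :=
  Ideal.span {m | ∃ i j, G.Adj i j ∧ m = X i * X j}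

/-- The `s`-th symbolic power of an ideal: the intersection of the `s`-th powers of its
minimal primes. -/
noncomputable def symbolicPower {R : Type} [CommRing R] (I : Ideal R) (s : ℕ) : Ideal R :=
  ⨅ p ∈ I.minimalPrimes, p ^ s

namespace Stmt4Aux

variable {k : Type} [Field k] {n : ℕ}

/-- weight of a monomial exponent: total degree away from `i`. -/
def wdeg (i : Fin n) (d : Fin n →₀ ℕ) : ℕ := ∑ j ∈ Finset.univ.erase i, d j

lemma wdeg_add (i : Fin n) (a b : Fin n →₀ ℕ) : wdeg i (a + b) = wdeg i a + wdeg i b := by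
  simp [wdeg, Finset.sum_add_distrib]

/-- the ideal of polynomials all of whose monomials have `wdeg i ≥ s`. -/
def Q (i : Fin n) (s : ℕ) : Ideal (MvPolynomial (Fin n) k) where
  carrier := {f | ∀ d ∈ f.support, s ≤ wdeg i d}
  add_mem' := by
    classical
    intro f g hf hg d hd
    rcases Finset.mem_union.1 (MvPolynomial.support_add hd) with h | h
    · exact hf d h
    · exact hg d h
  zero_mem' := by simp
  smul_mem' := by
    classical
    intro c f hf d hd
    rw [smul_eq_mul] at hd
    obtain ⟨a, ha, b, hb, rfl⟩ := Finset.mem_add.1 (MvPolynomial.support_mul c f hd)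
    rw [wdeg_add]
    exact le_add_of_le_right (hf b hb)

lemma mem_Q {i : Fin n} {s : ℕ} {f : MvPolynomial (Fin n) k} :
    f ∈ Q i s ↔ ∀ d ∈ f.support, s ≤ wdeg i d := Iff.rfl

lemma Q_mul_le (i : Fin n) (a b : ℕ) : (Q i a : Ideal (MvPolynomial (Fin n) k)) * Q i b ≤ Q i (a + b) := by
  classical
  rw [Ideal.mul_le]
  intro f hf g hg d hd
  obtain ⟨u, hu, v, hv, rfl⟩ := Finset.mem_add.1 (MvPolynomial.support_mul f g hd)
  rw [wdeg_add]
  exact add_le_add (hf u hu) (hg v hv)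

lemma X_mem_Q {i j : Fin n} (h : j ≠ i) : (X j : MvPolynomial (Fin n) k) ∈ Q i 1 := by
  intro d hd
  rw [MvPolynomial.support_X, Finset.mem_singleton] at hd
  subst hd
  simp [wdeg, Finsupp.single_apply, Finset.sum_ite_eq, h]

lemma monomial_mem_Q_pow {i : Fin n} (s : ℕ) (d : Fin n →₀ ℕ) (c : k) (h : s ≤ wdeg i d) :
    (monomial d c : MvPolynomial (Fin n) k) ∈ (Q i 1 : Ideal (MvPolynomial (Fin n) k)) ^ s := by
  classical
  induction s generalizing d with
  | zero => simp
  | succ s ih =>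
    have h1 : 1 ≤ wdeg i d := le_trans (by omega) h
    have : ∃ j ∈ Finset.univ.erase i, d j ≠ 0 := by
      by_contra hc
      push_neg at hc
      have : wdeg i d = 0 := Finset.sum_eq_zero hc
      omega
    obtain ⟨j, hj, hdj⟩ := this
    have hji : j ≠ i := (Finset.mem_erase.1 hj).1
    have hle : Finsupp.single j 1 ≤ d := by
      rw [Finsupp.single_le_iff]
      omega
    have hsplit : Finsupp.single j 1 + (d - Finsupp.single j 1) = d :=
      add_tsub_cancel_of_le hle
    have hw : wdeg i d = 1 + wdeg i (d - Finsupp.single j 1) := by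
      conv_lhs => rw [← hsplit]
      rw [wdeg_add]
      congr 1
      simp [wdeg, Finsupp.single_apply, Finset.sum_ite_eq, hji]
    have hmono : (monomial d c : MvPolynomial (Fin n) k)
        = X j * monomial (d - Finsupp.single j 1) c := by
      rw [X, monomial_mul, one_mul, hsplit]
    rw [hmono, pow_succ']
    exact Ideal.mul_mem_mul (X_mem_Q hji) (ih _ (by omega))

lemma Q_pow (i : Fin n) (s : ℕ) :
    (Q i 1 : Ideal (MvPolynomial (Fin n) k)) ^ s = Q i s := by
  apply le_antisymm
  · induction s with
    | zero => intro f _; exact fun d _ => Nat.zero_le _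
    | succ s ih =>
      rw [pow_succ]
      exact le_trans (Ideal.mul_mono ih le_rfl) (Q_mul_le i s 1)
  · intro f hf
    rw [f.as_sum]
    exact Ideal.sum_mem _ fun d hd => monomial_mem_Q_pow s d _ (hf d hd)

end Stmt4Aux

namespace Stmt4Aux
variable {k : Type} [Field k] {n : ℕ}

noncomputable def phi (i : Fin n) : MvPolynomial (Fin n) k →ₐ[k] Polynomial k :=
  aeval (fun j => if j = i then Polynomial.X else 0)

lemma phi_monomial_impure (i : Fin n) (d : Fin n →₀ ℕ) (c : k)
    (h : ∃ j, j ≠ i ∧ d j ≠ 0) : phi i (monomial d c) = 0 := by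
  obtain ⟨j, hji, hdj⟩ := h
  rw [phi, aeval_monomial, Finsupp.prod]
  rw [Finset.prod_eq_zero (Finsupp.mem_support_iff.2 hdj) (by simp [hji, zero_pow hdj])]
  ring

lemma phi_monomial_pure (i : Fin n) (t : ℕ) (c : k) :
    phi i (monomial (Finsupp.single i t) c) = Polynomial.C c * Polynomial.X ^ t := by
  rw [phi, aeval_monomial, Finsupp.prod_single_index (by simp)]
  simp [Polynomial.algebraMap_eq]

lemma wdeg_pos_iff {i : Fin n} {d : Fin n →₀ ℕ} :
    1 ≤ wdeg i d ↔ ∃ j, j ≠ i ∧ d j ≠ 0 := by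
  constructor
  · intro h
    by_contra hc
    push_neg at hc
    have : wdeg i d = 0 := Finset.sum_eq_zero fun j hj => hc j (Finset.mem_erase.1 hj).1
    omega
  · rintro ⟨j, hji, hdj⟩
    calc 1 ≤ d j := by omega
    _ ≤ wdeg i d := Finset.single_le_sum (f := fun l => d l) (fun _ _ => Nat.zero_le _)
        (Finset.mem_erase.2 ⟨hji, Finset.mem_univ j⟩)

lemma ker_phi (i : Fin n) : RingHom.ker (phi i (k := k) (n := n)).toRingHom = Q i 1 := by
  classical
  ext f
  rw [RingHom.mem_ker, mem_Q]
  constructor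
  · intro hf d hd
    by_contra hc
    rw [wdeg_pos_iff] at hc
    push_neg at hc
    have hdpure : d = Finsupp.single i (d i) := by
      ext j
      by_cases hj : j = i
      · subst hj; simp
      · rw [hc j hj, Finsupp.single_apply, if_neg (fun h => hj h.symm)]
    have : (phi i f).coeff (d i) = f.coeff d := by
      conv_lhs => rw [f.as_sum, map_sum, Polynomial.finset_sum_coeff]
      rw [Finset.sum_eq_single d]
      · rw [hdpure, phi_monomial_pure, ← hdpure]
        simp
      · intro d' hd' hne
        by_cases hp : ∃ j, j ≠ i ∧ d' j ≠ 0
        · rw [phi_monomial_impure i d' _ hp]; simp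
        · push_neg at hp
          have hd'pure : d' = Finsupp.single i (d' i) := by
            ext j
            by_cases hj : j = i
            · subst hj; simp
            · rw [hp j hj, Finsupp.single_apply, if_neg (fun h => hj h.symm)]
          rw [hd'pure, phi_monomial_pure]
          have : d' i ≠ d i := by
            intro h
            exact hne (by rw [hd'pure, h, ← hdpure])
          simp [Polynomial.coeff_X_pow, Ne.symm this]
      · intro h; exact absurd hd h
    have hf' : phi i f = 0 := hf
    rw [hf', Polynomial.coeff_zero] at this
    exact (MvPolynomial.mem_support_iff.1 hd) this.symm
  · intro hf
    show phi i f = 0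
    conv_lhs => rw [f.as_sum, map_sum]
    apply Finset.sum_eq_zero
    intro d hd
    exact phi_monomial_impure i d _ (wdeg_pos_iff.1 (hf d hd))

instance Q_one_isPrime (i : Fin n) : (Q i 1 : Ideal (MvPolynomial (Fin n) k)).IsPrime := by
  rw [← ker_phi]
  exact RingHom.ker_isPrime _

lemma X_notMem_Q (i : Fin n) : (X i : MvPolynomial (Fin n) k) ∉ Q i 1 := by
  intro h
  have := h (Finsupp.single i 1) (by rw [MvPolynomial.support_X]; simp)
  rw [wdeg_pos_iff] at this
  obtain ⟨j, hji, hdj⟩ := this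
  rw [Finsupp.single_apply, if_neg (fun h => hji h.symm)] at hdj
  exact hdj rfl

end Stmt4Aux

namespace Stmt4Aux
variable {k : Type} [Field k] {n : ℕ}

lemma edgeIdeal_eq_inf (hn : 2 ≤ n) :
    Ideal.span {m : MvPolynomial (Fin n) k | ∃ i j, (⊤ : SimpleGraph (Fin n)).Adj i j ∧ m = X i * X j}
      = ⨅ i, Q i 1 := by
  classical
  apply le_antisymm
  · rw [Ideal.span_le]
    rintro m ⟨a, b, hab, rfl⟩
    rw [SimpleGraph.top_adj] at hab
    rw [SetLike.mem_coe, Submodule.mem_iInf]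
    intro i
    rcases ne_or_eq a i with h | rfl
    · exact Ideal.mul_mem_right _ _ (X_mem_Q h)
    · exact Ideal.mul_mem_left _ _ (X_mem_Q (Ne.symm hab))
  · intro f hf
    rw [Submodule.mem_iInf] at hf
    rw [f.as_sum]
    apply Ideal.sum_mem
    intro d hd
    -- d has two distinct nonzero coordinates
    have h1 : ∃ a, d a ≠ 0 := by
      obtain ⟨i⟩ : Nonempty (Fin n) := ⟨⟨0, by omega⟩⟩
      obtain ⟨j, _, hj⟩ := wdeg_pos_iff.1 (hf i d hd)
      exact ⟨j, hj⟩
    obtain ⟨a, ha⟩ := h1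
    obtain ⟨b, hba, hb⟩ := wdeg_pos_iff.1 (hf a d hd)
    have hab : a ≠ b := Ne.symm hba
    have hle : Finsupp.single a 1 + Finsupp.single b 1 ≤ d := by
      intro j
      rw [Finsupp.add_apply, Finsupp.single_apply, Finsupp.single_apply]
      rcases eq_or_ne a j with rfl | h1'
      · rw [if_pos rfl, if_neg (fun h => hab h.symm)]; omega
      · rw [if_neg h1']
        rcases eq_or_ne b j with rfl | h2'
        · rw [if_pos rfl]; omega
        · rw [if_neg h2']; omega
    have hsplit : Finsupp.single a 1 + Finsupp.single b 1
        + (d - (Finsupp.single a 1 + Finsupp.single b 1)) = d := add_tsub_cancel_of_le hle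
    have : (monomial d (coeff d f) : MvPolynomial (Fin n) k)
        = X a * X b * monomial (d - (Finsupp.single a 1 + Finsupp.single b 1)) (coeff d f) := by
      rw [X, X, monomial_mul, monomial_mul, one_mul, one_mul, hsplit]
    rw [this]
    exact Ideal.mul_mem_right _ _ (Ideal.subset_span ⟨a, b, (SimpleGraph.top_adj a b).2 hab, rfl⟩)

lemma minPrimes (hn : 2 ≤ n) :
    (Ideal.span {m : MvPolynomial (Fin n) k | ∃ i j, (⊤ : SimpleGraph (Fin n)).Adj i j ∧ m = X i * X j}).minimalPrimes
      = Set.range (fun i : Fin n => (Q i 1 : Ideal (MvPolynomial (Fin n) k))) := by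
  classical
  rw [edgeIdeal_eq_inf hn]
  have hIle : ∀ i : Fin n, (⨅ j, (Q j 1 : Ideal (MvPolynomial (Fin n) k))) ≤ Q i 1 :=
    fun i => iInf_le _ i
  have hprod : ∀ (q : Ideal (MvPolynomial (Fin n) k)), q.IsPrime →
      (⨅ j, (Q j 1 : Ideal (MvPolynomial (Fin n) k))) ≤ q → ∃ i : Fin n, Q i 1 ≤ q := by
    intro q hq hle
    have h1 : (∏ i : Fin n, (Q i 1 : Ideal (MvPolynomial (Fin n) k))) ≤ q := by
      refine le_trans Ideal.prod_le_inf (le_trans ?_ hle)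
      rw [Finset.inf_eq_iInf]
      simp
    obtain ⟨i, _, hi⟩ := (hq.prod_le).1 h1
    exact ⟨i, hi⟩
  have hQne : ∀ i j : Fin n, (Q i 1 : Ideal (MvPolynomial (Fin n) k)) ≤ Q j 1 → i = j := by
    intro i j hij
    by_contra hne
    exact X_notMem_Q j (hij (X_mem_Q (Ne.symm hne)))
  ext q
  constructor
  · rintro ⟨⟨hq, hle⟩, hmin⟩
    obtain ⟨i, hi⟩ := hprod q hq hle
    have : q ≤ Q i 1 := hmin ⟨Q_one_isPrime i, hIle i⟩ hi
    exact ⟨i, (le_antisymm hi this)⟩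
  · rintro ⟨i, rfl⟩
    refine ⟨⟨Q_one_isPrime i, hIle i⟩, ?_⟩
    rintro p ⟨hp, hIp⟩ hpq
    obtain ⟨j, hj⟩ := hprod p hp hIp
    have := hQne j i (le_trans hj hpq)
    subst this
    exact hj

end Stmt4Aux

namespace Stmt4Aux
variable {k : Type} [Field k] {n : ℕ}

noncomputable def u (n : ℕ) : Fin n →₀ ℕ := ∑ j : Fin n, Finsupp.single j 1

lemma u_apply (j : Fin n) : u n j = 1 := by
  classical
  rw [u, Finsupp.finset_sum_apply]
  simp [Finsupp.single_apply]

lemma prod_X_eq : (∏ j : Fin n, (X j : MvPolynomial (Fin n) k)) = monomial (u n) 1 := by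
  classical
  have hsupp : (u n).support = Finset.univ := by
    ext j; simp [u_apply]
  rw [← prod_X_pow_eq_monomial, hsupp]
  exact Finset.prod_congr rfl fun j _ => by rw [u_apply, pow_one]

lemma wdeg_u (i : Fin n) : wdeg i (u n) = n - 1 := by
  classical
  rw [wdeg]
  rw [Finset.sum_congr rfl fun j _ => u_apply j]
  rw [Finset.sum_const, smul_eq_mul, mul_one,
    Finset.card_erase_of_mem (Finset.mem_univ i), Finset.card_univ, Fintype.card_fin]

lemma key (hn : 2 ≤ n) (i : Fin n) (f : MvPolynomial (Fin n) k) :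
    f * monomial (u n) 1 ∈ Q i n ↔ f ∈ Q i 1 := by
  constructor
  · intro h d hd
    have hc : coeff (d + u n) (f * monomial (u n) 1) = coeff d f :=
      (coeff_mul_monomial d (u n) 1 f).trans (mul_one _)
    have hmem : d + u n ∈ (f * monomial (u n) 1).support := by
      rw [MvPolynomial.mem_support_iff, hc]
      exact MvPolynomial.mem_support_iff.1 hd
    have := h _ hmem
    rw [wdeg_add, wdeg_u] at this
    omega
  · intro h
    classical
    have hm : (monomial (u n) 1 : MvPolynomial (Fin n) k) ∈ Q i (n - 1) := by
      intro d hd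
      rw [MvPolynomial.support_monomial, if_neg (one_ne_zero)] at hd
      rw [Finset.mem_singleton] at hd
      subst hd
      rw [wdeg_u]
    have := Q_mul_le i 1 (n - 1) (Ideal.mul_mem_mul h hm)
    have heq : 1 + (n - 1) = n := by omega
    rwa [heq] at this

end Stmt4Aux

/-- For the complete graph `K_n` (`n ≥ 2`), `I(K_n)^{(n)} : (x_1 ⋯ x_n) = I(K_n)`. -/
theorem stmt4 (k : Type) [Field k] (n : ℕ) (hn : 2 ≤ n) :
    (symbolicPower (edgeIdeal k (⊤ : SimpleGraph (Fin n))) n).colon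
        (Ideal.span {∏ i : Fin n, (X i : MvPolynomial (Fin n) k)}) =
      edgeIdeal k (⊤ : SimpleGraph (Fin n)) := by
  classical
  have hI : edgeIdeal k (⊤ : SimpleGraph (Fin n)) = ⨅ i, Stmt4Aux.Q i 1 :=
    Stmt4Aux.edgeIdeal_eq_inf hn
  have hsym : symbolicPower (edgeIdeal k (⊤ : SimpleGraph (Fin n))) n = ⨅ i, Stmt4Aux.Q i n := by
    rw [symbolicPower]
    have hmp : (edgeIdeal k (⊤ : SimpleGraph (Fin n))).minimalPrimes
        = Set.range (fun i : Fin n => (Stmt4Aux.Q i 1 : Ideal (MvPolynomial (Fin n) k))) :=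
      Stmt4Aux.minPrimes hn
    rw [hmp, iInf_range]
    exact iInf_congr fun i => Stmt4Aux.Q_pow i n
  ext f
  rw [Ideal.mem_colon_span_singleton, hsym, hI, Stmt4Aux.prod_X_eq, Submodule.mem_iInf,
    Submodule.mem_iInf]
  exact forall_congr' fun i => Stmt4Aux.key hn i f
end

section
/- Let G be a simple graph with edge ideal I(G), and let e = x_i x_j be a leaf edge of G (i.e., one of i, j has degree 1 in G). Then for all s ≥ 2, I(G)^{(s)} : e = I(G)^{(s-1)}. -/
open MvPolynomial

namespace Stmt5Aux

variable {k : Type} [Field k] {n : ℕ}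

/-- Weighted degree: total degree in the variables from `C`. -/
def Dw (C : Finset (Fin n)) (m : Fin n →₀ ℕ) : ℕ := ∑ v ∈ C, m v

lemma Dw_add (C : Finset (Fin n)) (a b : Fin n →₀ ℕ) :
    Dw C (a + b) = Dw C a + Dw C b := by
  simp [Dw, Finset.sum_add_distrib]

lemma Dw_single (C : Finset (Fin n)) (v : Fin n) [Decidable (v ∈ C)] :
    Dw C (Finsupp.single v 1) = if v ∈ C then 1 else 0 := by
  classical
  simp [Dw, Finsupp.single_apply]

/-- The ideal generated by the variables indexed by `C`. -/
noncomputable def spanX (k : Type) [Field k] (C : Finset (Fin n)) :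
    Ideal (MvPolynomial (Fin n) k) :=
  Ideal.span ((fun v => (X v : MvPolynomial (Fin n) k)) '' (C : Set (Fin n)))

lemma X_mem_spanX {C : Finset (Fin n)} {v : Fin n} (hv : v ∈ C) :
    (X v : MvPolynomial (Fin n) k) ∈ spanX k C :=
  Ideal.subset_span ⟨v, hv, rfl⟩

/-- The ideal of polynomials all of whose monomials have `C`-degree at least `t`. -/
def Mdeg (k : Type) [Field k] (C : Finset (Fin n)) (t : ℕ) :
    Ideal (MvPolynomial (Fin n) k) where
  carrier := {f | ∀ m ∈ f.support, t ≤ Dw C m}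
  zero_mem' := by simp
  add_mem' := by
    intro a b ha hb m hm
    rcases Finset.mem_union.mp (MvPolynomial.support_add hm) with h | h
    · exact ha m h
    · exact hb m h
  smul_mem' := by
    intro c f hf m hm
    rw [smul_eq_mul] at hm
    obtain ⟨ma, hma, mb, hmb, rfl⟩ := Finset.mem_add.mp (MvPolynomial.support_mul c f hm)
    have := hf mb hmb
    rw [Dw_add]
    omega

lemma mem_Mdeg {C : Finset (Fin n)} {t : ℕ} {f : MvPolynomial (Fin n) k} :
    f ∈ Mdeg k C t ↔ ∀ m ∈ f.support, t ≤ Dw C m := Iff.rfl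

lemma spanX_le_Mdeg_one (C : Finset (Fin n)) : spanX k C ≤ Mdeg k C 1 := by
  classical
  rw [spanX, Ideal.span_le]
  rintro _ ⟨v, hv, rfl⟩
  show (X v : MvPolynomial (Fin n) k) ∈ Mdeg k C 1
  rw [mem_Mdeg]
  intro m hm
  rw [MvPolynomial.support_X, Finset.mem_singleton] at hm
  subst hm
  rw [Dw_single, if_pos (Finset.mem_coe.mp hv)]

lemma pow_le_Mdeg (C : Finset (Fin n)) (t : ℕ) : spanX k C ^ t ≤ Mdeg k C t := by
  classical
  induction t with
  | zero => intro f _; rw [mem_Mdeg]; intro m _; exact Nat.zero_le _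
  | succ u ih =>
    rw [pow_succ]
    refine Ideal.mul_le.mpr ?_
    intro a ha b hb
    rw [mem_Mdeg]
    intro m hm
    obtain ⟨ma, hma, mb, hmb, rfl⟩ := Finset.mem_add.mp (MvPolynomial.support_mul a b hm)
    have h1 := (ih ha) ma hma
    have h2 := (spanX_le_Mdeg_one C hb) mb hmb
    rw [Dw_add]
    omega

lemma monomial_mem_pow (C : Finset (Fin n)) (t : ℕ) :
    ∀ (m : Fin n →₀ ℕ) (c : k), t ≤ Dw C m → monomial m c ∈ spanX k C ^ t := by
  classical
  induction t with
  | zero => intro m c _; simp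
  | succ u ih =>
    intro m c hm
    obtain ⟨v, hvC, hv⟩ : ∃ v ∈ C, m v ≠ 0 := by
      by_contra h
      push_neg at h
      have : Dw C m = 0 := Finset.sum_eq_zero h
      omega
    have hdec : (m - Finsupp.single v 1) + Finsupp.single v 1 = m := by
      ext u
      rcases eq_or_ne v u with rfl | hne
      · simp [Finsupp.tsub_apply]
        omega
      · simp [Finsupp.tsub_apply, Finsupp.single_apply, hne]
    have hm' : u ≤ Dw C (m - Finsupp.single v 1) := by
      have hadd := Dw_add C (m - Finsupp.single v 1) (Finsupp.single v 1)
      rw [hdec, Dw_single] at hadd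
      simp only [if_pos hvC] at hadd
      omega
    have h1 : monomial (m - Finsupp.single v 1) c ∈ spanX k C ^ u := ih _ _ hm'
    have h2 : monomial m c = X v * monomial (m - Finsupp.single v 1) c := by
      rw [X, monomial_mul, one_mul, add_comm, hdec]
    rw [h2, pow_succ']
    exact Ideal.mul_mem_mul (X_mem_spanX hvC) h1

lemma Mdeg_le_pow (C : Finset (Fin n)) (t : ℕ) : Mdeg k C t ≤ spanX k C ^ t := by
  intro f hf
  rw [mem_Mdeg] at hf
  nth_rewrite 1 [MvPolynomial.as_sum f]
  exact Submodule.sum_mem _ fun m hm => monomial_mem_pow C t m _ (hf m hm)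

lemma pow_eq_Mdeg (C : Finset (Fin n)) (t : ℕ) : spanX k C ^ t = Mdeg k C t :=
  le_antisymm (pow_le_Mdeg C t) (Mdeg_le_pow C t)

lemma X_mem_spanX_iff {C : Finset (Fin n)} {v : Fin n} :
    (X v : MvPolynomial (Fin n) k) ∈ spanX k C ↔ v ∈ C := by
  classical
  constructor
  · intro h
    by_contra hv
    have h1 := spanX_le_Mdeg_one C h
    rw [mem_Mdeg] at h1
    have := h1 (Finsupp.single v 1) (by rw [MvPolynomial.support_X]; simp)
    rw [Dw_single] at this
    simp [hv] at this
  · exact X_mem_spanX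

lemma shift_mem {C : Finset (Fin n)} {t : ℕ} {f : MvPolynomial (Fin n) k} {v : Fin n}
    (hv : v ∈ C) (h : f * X v ∈ Mdeg k C t) : f ∈ Mdeg k C (t - 1) := by
  classical
  rw [mem_Mdeg] at h ⊢
  intro m hm
  have hmem : (m + Finsupp.single v 1) ∈ (f * X v).support := by
    rw [MvPolynomial.mem_support_iff, MvPolynomial.coeff_mul_X]
    exact MvPolynomial.mem_support_iff.mp hm
  have := h _ hmem
  rw [Dw_add, Dw_single, if_pos hv] at this
  omega

lemma shift_not_mem {C : Finset (Fin n)} {t : ℕ} {f : MvPolynomial (Fin n) k} {v : Fin n}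
    (hv : v ∉ C) (h : f * X v ∈ Mdeg k C t) : f ∈ Mdeg k C t := by
  classical
  rw [mem_Mdeg] at h ⊢
  intro m hm
  have hmem : (m + Finsupp.single v 1) ∈ (f * X v).support := by
    rw [MvPolynomial.mem_support_iff, MvPolynomial.coeff_mul_X]
    exact MvPolynomial.mem_support_iff.mp hm
  have := h _ hmem
  rw [Dw_add, Dw_single, if_neg hv] at this
  omega

lemma spanX_isPrime (C : Finset (Fin n)) : (spanX k C).IsPrime := by
  classical
  set π : MvPolynomial (Fin n) k →ₐ[k] MvPolynomial (Fin n) k :=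
    aeval (fun v => if v ∈ C then 0 else X v) with hπ
  have key : ∀ f : MvPolynomial (Fin n) k, f - π f ∈ spanX k C := by
    intro f
    induction f using MvPolynomial.induction_on with
    | C a => simp [hπ]
    | add p q hp hq =>
      rw [map_add]
      have := add_mem hp hq
      convert this using 1
      ring
    | mul_X p v hp =>
      rw [map_mul]
      have hXv : π (X v) = if v ∈ C then 0 else X v := by rw [hπ, aeval_X]
      by_cases hv : v ∈ C
      · rw [hXv, if_pos hv, mul_zero, sub_zero]
        exact Ideal.mul_mem_left _ _ (X_mem_spanX hv)
      · rw [hXv, if_neg hv]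
        have : p * X v - π p * X v = (p - π p) * X v := by ring
        rw [this]
        exact Ideal.mul_mem_right _ _ hp
  have hker : spanX k C = RingHom.ker π := by
    apply le_antisymm
    · rw [spanX, Ideal.span_le]
      rintro _ ⟨v, hv, rfl⟩
      simp [RingHom.mem_ker, hπ, Finset.mem_coe.mp hv]
    · intro f hf
      have h0 : π f = 0 := hf
      have := key f
      rwa [h0, sub_zero] at this
  rw [hker]
  exact RingHom.ker_isPrime π



lemma minimalPrime_structure {k : Type} [Field k] {n : ℕ} (G : SimpleGraph (Fin n))
    {p : Ideal (MvPolynomial (Fin n) k)} (hp : p ∈ (edgeIdeal k G).minimalPrimes) :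
    ∃ C : Finset (Fin n), p = spanX k C := by
  classical
  set C : Finset (Fin n) := Finset.univ.filter (fun v => X v ∈ p) with hCdef
  have hmemC : ∀ v : Fin n, v ∈ C ↔ (X v : MvPolynomial (Fin n) k) ∈ p := by
    intro v; simp [hCdef]
  refine ⟨C, ?_⟩
  have hprime : p.IsPrime := hp.1.1
  have hIp : edgeIdeal k G ≤ p := hp.1.2
  have h1 : spanX k C ≤ p := by
    rw [spanX, Ideal.span_le]
    rintro _ ⟨v, hv, rfl⟩
    exact (hmemC v).mp (Finset.mem_coe.mp hv)
  have h2 : edgeIdeal k G ≤ spanX k C := by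
    rw [edgeIdeal, Ideal.span_le]
    rintro _ ⟨a, b, hab, rfl⟩
    have hin : (X a * X b : MvPolynomial (Fin n) k) ∈ p :=
      hIp (Ideal.subset_span ⟨a, b, hab, rfl⟩)
    rcases hprime.mem_or_mem hin with h | h
    · exact Ideal.mul_mem_right _ _ (X_mem_spanX ((hmemC a).mpr h))
    · exact Ideal.mul_mem_left _ _ (X_mem_spanX ((hmemC b).mpr h))
  exact le_antisymm (hp.2 ⟨spanX_isPrime C, h2⟩ h1) h1

end Stmt5Aux

open Stmt5Aux in
/-- If `e = x_i * x_j` is a leaf edge of `G` (the vertex `j` has `i` as its only neighbour),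
then for all `s ≥ 2`, `I(G)^{(s)} : e = I(G)^{(s-1)}`. -/
theorem stmt5 (k : Type) [Field k] (n : ℕ) (G : SimpleGraph (Fin n)) (i j : Fin n)
    (hleaf : G.neighborSet j = {i}) (s : ℕ) (hs : 2 ≤ s) :
    (symbolicPower (edgeIdeal k G) s).colon
        (Ideal.span {(X i * X j : MvPolynomial (Fin n) k)}) =
      symbolicPower (edgeIdeal k G) (s - 1) := by
  classical
  have hadj' : G.Adj j i := by
    have : i ∈ G.neighborSet j := by rw [hleaf]; rfl
    exact this
  have hadj : G.Adj i j := hadj'.symm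
  have hne : i ≠ j := hadj.ne
  have he_mem : ∀ p ∈ (edgeIdeal k G).minimalPrimes,
      (X i * X j : MvPolynomial (Fin n) k) ∈ p :=
    fun p hp => hp.1.2 (Ideal.subset_span ⟨i, j, hadj, rfl⟩)
  apply le_antisymm
  · intro f hf
    have hfe : f * (X i * X j) ∈ symbolicPower (edgeIdeal k G) s :=
      Ideal.mem_colon_span_singleton.mp hf
    rw [symbolicPower, Submodule.mem_iInf]
    intro p
    rw [Submodule.mem_iInf]
    intro hp
    have hfe' : f * (X i * X j) ∈ p ^ s := by
      rw [symbolicPower, Submodule.mem_iInf] at hfe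
      exact (Submodule.mem_iInf _).mp (hfe p) hp
    obtain ⟨C, rfl⟩ := minimalPrime_structure G hp
    have hprime : (spanX k C).IsPrime := spanX_isPrime C
    have hcover : i ∈ C ∨ j ∈ C := by
      rcases hprime.mem_or_mem (he_mem _ hp) with h | h
      · exact Or.inl (X_mem_spanX_iff.mp h)
      · exact Or.inr (X_mem_spanX_iff.mp h)
    have hnotboth : ¬(i ∈ C ∧ j ∈ C) := by
      rintro ⟨hiC, hjC⟩
      set C' : Finset (Fin n) := C.erase j with hC'def
      have hiC' : i ∈ C' := Finset.mem_erase.mpr ⟨hne, hiC⟩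
      have hle : spanX k C' ≤ spanX k C := by
        rw [spanX, spanX]
        apply Ideal.span_mono
        exact Set.image_mono (by exact_mod_cast Finset.erase_subset _ _)
      have hIC' : edgeIdeal k G ≤ spanX k C' := by
        rw [edgeIdeal, Ideal.span_le]
        rintro _ ⟨a, b, hab, rfl⟩
        have hin : (X a * X b : MvPolynomial (Fin n) k) ∈ spanX k C :=
          hp.1.2 (Ideal.subset_span ⟨a, b, hab, rfl⟩)
        rcases hprime.mem_or_mem hin with h | h
        · have haC : a ∈ C := X_mem_spanX_iff.mp h
          by_cases haj : a = j
          · subst haj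
            have hbi : b = i := by
              have : b ∈ G.neighborSet a := hab
              rw [hleaf] at this
              exact this
            subst hbi
            exact Ideal.mul_mem_left _ _ (X_mem_spanX hiC')
          · exact Ideal.mul_mem_right _ _
              (X_mem_spanX (Finset.mem_erase.mpr ⟨haj, haC⟩))
        · have hbC : b ∈ C := X_mem_spanX_iff.mp h
          by_cases hbj : b = j
          · subst hbj
            have hai : a = i := by
              have : a ∈ G.neighborSet b := hab.symm
              rw [hleaf] at this
              exact this
            subst hai
            exact Ideal.mul_mem_right _ _ (X_mem_spanX hiC')
          · exact Ideal.mul_mem_left _ _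
              (X_mem_spanX (Finset.mem_erase.mpr ⟨hbj, hbC⟩))
      have hple : spanX k C ≤ spanX k C' := hp.2 ⟨spanX_isPrime C', hIC'⟩ hle
      have : j ∈ C' := X_mem_spanX_iff.mp (hple (X_mem_spanX hjC))
      exact (Finset.mem_erase.mp this).1 rfl
    rw [pow_eq_Mdeg] at hfe'
    rw [pow_eq_Mdeg]
    rcases hcover with hiC | hjC
    · have hjC : j ∉ C := fun h => hnotboth ⟨hiC, h⟩
      have h1 : (f * X i) * X j ∈ Mdeg k C s := by rwa [mul_assoc]
      have h2 : f * X i ∈ Mdeg k C s := shift_not_mem hjC h1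
      exact shift_mem hiC h2
    · have hiC : i ∉ C := fun h => hnotboth ⟨h, hjC⟩
      have h1 : (f * X j) * X i ∈ Mdeg k C s := by
        have : (f * X j) * X i = f * (X i * X j) := by ring
        rwa [this]
      have h2 : f * X j ∈ Mdeg k C s := shift_not_mem hiC h1
      exact shift_mem hjC h2
  · intro f hf
    rw [Ideal.mem_colon_span_singleton]
    rw [symbolicPower, Submodule.mem_iInf]
    intro p
    rw [Submodule.mem_iInf]
    intro hp
    have hf' : f ∈ p ^ (s - 1) := by
      rw [symbolicPower, Submodule.mem_iInf] at hf
      exact (Submodule.mem_iInf _).mp (hf p) hp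
    have hps : p ^ s = p ^ (s - 1) * p := by
      rw [← pow_succ]
      congr 1
      omega
    rw [hps]
    exact Ideal.mul_mem_mul hf' (he_mem p hp)
end

section
/- Let a = (a_1,...,a_n) with all a_i ≥ 1, and W_a the graph with vertices x_1,...,x_n and y_{i,ℓ} (1 ≤ ℓ ≤ a_i), edges {x_i,x_j} for i ≠ j and {x_i,y_{i,ℓ}}. Then I(W_a)^{(n)} : (x_1⋯x_n) = I(W_a) + (y_{1,1},...,y_{1,a_1})(y_{2,1},...,y_{2,a_2})⋯(y_{n,1},...,y_{n,a_n}). -/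
open MvPolynomial

/-- The whisker graph `W_a`: the complete graph on `Fin n` together with `a i` leaves
`y_{i,1},…,y_{i,a i}` attached to each vertex `i`. -/
def whiskerGraph (n : ℕ) (a : Fin n → ℕ) :
    SimpleGraph (Fin n ⊕ Σ i : Fin n, Fin (a i)) :=
  SimpleGraph.fromRel (fun u v =>
    (∃ i j : Fin n, i ≠ j ∧ u = Sum.inl i ∧ v = Sum.inl j) ∨
    (∃ (i : Fin n) (ℓ : Fin (a i)), u = Sum.inl i ∧ v = Sum.inr ⟨i, ℓ⟩))


open MvPolynomial

noncomputable section AuxStmt13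

namespace Stmt13

attribute [local instance 0] Classical.propDecidable

/-- weight of an exponent vector on a set of variables -/
def wt {V : Type} (S : Set V) (m : V →₀ ℕ) : ℕ := m.sum fun v e => if v ∈ S then e else 0

variable {k : Type} [Field k] {V : Type}

lemma wt_zero (S : Set V) : wt S 0 = 0 := by simp [wt]

lemma wt_add (S : Set V) (m₁ m₂ : V →₀ ℕ) : wt S (m₁ + m₂) = wt S m₁ + wt S m₂ :=
  Finsupp.sum_add_index' (fun _ => by simp) (fun v e₁ e₂ => by split <;> simp)

lemma wt_single (S : Set V) (v : V) (e : ℕ) :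
    wt S (Finsupp.single v e) = if v ∈ S then e else 0 := by
  rw [wt, Finsupp.sum_single_index (by split <;> rfl)]

lemma exists_of_wt_pos {S : Set V} {m : V →₀ ℕ} (h : 1 ≤ wt S m) :
    ∃ v, v ∈ S ∧ m v ≠ 0 := by
  by_contra hc
  push_neg at hc
  have h0 : wt S m = 0 := by
    rw [wt, Finsupp.sum]
    refine Finset.sum_eq_zero fun v hv => ?_
    by_cases hvS : v ∈ S
    · rw [if_pos hvS]; exact hc v hvS
    · rw [if_neg hvS]
  omega

lemma wt_pos_of {S : Set V} {m : V →₀ ℕ} {v : V} (hv : v ∈ S) (hm : m v ≠ 0) :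
    1 ≤ wt S m := by
  classical
  have hsup : v ∈ m.support := Finsupp.mem_support_iff.2 hm
  have h1 : (if v ∈ S then m v else 0) ≤ wt S m := by
    rw [wt, Finsupp.sum]
    exact Finset.single_le_sum (f := fun u => if u ∈ S then m u else 0)
      (fun _ _ => Nat.zero_le _) hsup
  rw [if_pos hv] at h1
  omega

/-- monomial ideal of weight at least n -/
def Jd (k : Type) [Field k] {V : Type} (S : Set V) (n : ℕ) : Ideal (MvPolynomial V k) where
  carrier := {f | ∀ m ∈ f.support, n ≤ wt S m}
  zero_mem' := by simp
  add_mem' := by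
    classical
    intro f g hf hg m hm
    rcases Finset.mem_union.1 (MvPolynomial.support_add hm) with h | h
    exacts [hf m h, hg m h]
  smul_mem' := by
    classical
    intro c f hf m hm
    rw [smul_eq_mul] at hm
    obtain ⟨m₁, _, m₂, hm₂, rfl⟩ := Finset.mem_add.1 (MvPolynomial.support_mul c f hm)
    rw [wt_add]
    exact le_add_of_le_right (hf m₂ hm₂)

lemma mem_Jd {S : Set V} {n : ℕ} {f : MvPolynomial V k} :
    f ∈ Jd k S n ↔ ∀ m ∈ f.support, n ≤ wt S m := Iff.rfl

lemma pow_le_Jd (S : Set V) (n : ℕ) :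
    (Ideal.span (X '' S) : Ideal (MvPolynomial V k)) ^ n ≤ Jd k S n := by
  classical
  induction n with
  | zero => intro f _ m _; exact Nat.zero_le _
  | succ n ih =>
    rw [pow_succ]
    refine Ideal.mul_le.2 fun r hr s hs => ?_
    have hr' : ∀ m ∈ r.support, n ≤ wt S m := ih hr
    have hs' : s ∈ Jd k S 1 := by
      refine (Ideal.span_le.2 ?_) hs
      rintro g ⟨v, hv, rfl⟩
      intro m hm
      rw [MvPolynomial.support_X, Finset.mem_singleton] at hm
      subst hm
      rw [wt_single, if_pos hv]
    intro m hm
    obtain ⟨m₁, hm₁, m₂, hm₂, rfl⟩ := Finset.mem_add.1 (MvPolynomial.support_mul r s hm)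
    rw [wt_add]
    exact Nat.add_le_add (hr' m₁ hm₁) (hs' m₂ hm₂)

lemma monomial_mem_pow (S : Set V) (n : ℕ) : ∀ (m : V →₀ ℕ) (c : k), n ≤ wt S m →
    monomial m c ∈ (Ideal.span (X '' S) : Ideal (MvPolynomial V k)) ^ n := by
  induction n with
  | zero => intro m c _; simp
  | succ n ih =>
    intro m c hw
    obtain ⟨v, hv, hmv⟩ := exists_of_wt_pos (le_trans (by omega) hw)
    have hle : Finsupp.single v 1 ≤ m :=
      Finsupp.single_le_iff.2 (Nat.one_le_iff_ne_zero.2 hmv)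
    have hm : Finsupp.single v 1 + (m - Finsupp.single v 1) = m :=
      add_tsub_cancel_of_le hle
    have hwt : n ≤ wt S (m - Finsupp.single v 1) := by
      have h2 := wt_add S (Finsupp.single v 1) (m - Finsupp.single v 1)
      rw [hm, wt_single, if_pos hv] at h2
      omega
    have hx : (monomial m c : MvPolynomial V k)
        = X v * monomial (m - Finsupp.single v 1) c := by
      rw [X, monomial_mul, one_mul, hm]
    rw [hx, pow_succ']
    exact Ideal.mul_mem_mul (Ideal.subset_span ⟨v, hv, rfl⟩) (ih _ _ hwt)

lemma mem_pow_iff (S : Set V) (n : ℕ) (f : MvPolynomial V k) :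
    f ∈ (Ideal.span (X '' S) : Ideal (MvPolynomial V k)) ^ n ↔
      ∀ m ∈ f.support, n ≤ wt S m := by
  constructor
  · exact fun h => pow_le_Jd S n h
  · intro h
    rw [MvPolynomial.as_sum f]
    exact Ideal.sum_mem _ fun m hm => monomial_mem_pow S n m _ (h m hm)

lemma mem_span_X_iff (S : Set V) (f : MvPolynomial V k) :
    f ∈ (Ideal.span (X '' S) : Ideal (MvPolynomial V k)) ↔
      ∀ m ∈ f.support, 1 ≤ wt S m := by
  rw [← pow_one (Ideal.span (X '' S) : Ideal (MvPolynomial V k)), mem_pow_iff]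

lemma X_mem_span_iff (S : Set V) (v : V) :
    (X v : MvPolynomial V k) ∈ Ideal.span (X '' S) ↔ v ∈ S := by
  constructor
  · intro h
    have h1 := (mem_span_X_iff S (X v)).1 h (Finsupp.single v 1)
      (by rw [MvPolynomial.support_X]; exact Finset.mem_singleton_self _)
    obtain ⟨u, hu, hmu⟩ := exists_of_wt_pos h1
    rw [Finsupp.single_apply] at hmu
    by_cases huv : v = u
    · exact huv ▸ hu
    · rw [if_neg huv] at hmu; exact absurd rfl hmu
  · exact fun h => Ideal.subset_span ⟨v, h, rfl⟩

/-- kill the variables in S -/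
def killS (k : Type) [Field k] {V : Type} (S : Set V) :
    MvPolynomial V k →ₐ[k] MvPolynomial V k :=
  aeval fun v => if v ∈ S then 0 else X v

lemma sub_kill_mem (S : Set V) (f : MvPolynomial V k) :
    f - killS k S f ∈ Ideal.span (X '' S) := by
  induction f using MvPolynomial.induction_on with
  | C c => simp [killS]
  | add f g hf hg =>
    have h : (f + g) - killS k S (f + g) = (f - killS k S f) + (g - killS k S g) := by
      rw [map_add]; ring
    rw [h]; exact Ideal.add_mem _ hf hg
  | mul_X f v hf =>
    by_cases hv : v ∈ S
    · have h : f * X v - killS k S (f * X v) = f * X v := by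
        rw [map_mul, killS, aeval_X, if_pos hv, mul_zero, sub_zero]
      rw [h]
      exact Ideal.mul_mem_left _ f (Ideal.subset_span ⟨v, hv, rfl⟩)
    · have h : f * X v - killS k S (f * X v) = (f - killS k S f) * X v := by
        rw [map_mul, killS, aeval_X, if_neg hv]; ring
      rw [h]
      exact Ideal.mul_mem_right _ _ hf

lemma span_X_isPrime (S : Set V) :
    (Ideal.span (X '' S) : Ideal (MvPolynomial V k)).IsPrime := by
  have hker : (Ideal.span (X '' S) : Ideal (MvPolynomial V k))
      = RingHom.ker (killS k S).toRingHom := by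
    apply le_antisymm
    · rw [Ideal.span_le]
      rintro g ⟨v, hv, rfl⟩
      simp only [SetLike.mem_coe, RingHom.mem_ker, AlgHom.toRingHom_eq_coe,
        RingHom.coe_coe, killS, aeval_X]
      rw [if_pos hv]
    · intro f hf
      have h0 : killS k S f = 0 := hf
      have h1 := sub_kill_mem S f
      rwa [h0, sub_zero] at h1
  rw [hker]
  exact RingHom.ker_isPrime _

end Stmt13


namespace Stmt13

variable (k : Type) [Field k] (n : ℕ) (a : Fin n → ℕ)


abbrev Vt := Fin n ⊕ Σ i : Fin n, Fin (a i)

def S0 : Set (Vt n a) := Set.range Sum.inl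

def SP (i : Fin n) : Set (Vt n a) :=
  fun v => Sum.elim (fun j => j ≠ i) (fun p => p.1 = i) v

def P0 : Ideal (MvPolynomial (Vt n a) k) := Ideal.span (X '' S0 n a)

def PP (i : Fin n) : Ideal (MvPolynomial (Vt n a) k) := Ideal.span (X '' SP n a i)

lemma adj_xx {i j : Fin n} (h : i ≠ j) :
    (whiskerGraph n a).Adj (Sum.inl i) (Sum.inl j) := by
  rw [whiskerGraph, SimpleGraph.fromRel_adj]
  exact ⟨fun hc => h (Sum.inl_injective hc), Or.inl (Or.inl ⟨i, j, h, rfl, rfl⟩)⟩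

lemma adj_xy (i : Fin n) (ℓ : Fin (a i)) :
    (whiskerGraph n a).Adj (Sum.inl i) (Sum.inr ⟨i, ℓ⟩) := by
  rw [whiskerGraph, SimpleGraph.fromRel_adj]
  exact ⟨Sum.inl_ne_inr, Or.inl (Or.inr ⟨i, ℓ, rfl, rfl⟩)⟩

lemma edge_mem {u v : Vt n a} (h : (whiskerGraph n a).Adj u v) :
    (X u * X v : MvPolynomial (Vt n a) k) ∈ edgeIdeal k (whiskerGraph n a) :=
  Ideal.subset_span ⟨u, v, h, rfl⟩

lemma adj_cases {u v : Vt n a} (h : (whiskerGraph n a).Adj u v) :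
    (∃ i j, i ≠ j ∧ u = Sum.inl i ∧ v = Sum.inl j) ∨
    (∃ i ℓ, (u = Sum.inl i ∧ v = Sum.inr ⟨i, ℓ⟩) ∨ (v = Sum.inl i ∧ u = Sum.inr ⟨i, ℓ⟩)) := by
  rw [whiskerGraph, SimpleGraph.fromRel_adj] at h
  obtain ⟨-, h | h⟩ := h
  · rcases h with ⟨i, j, hij, rfl, rfl⟩ | ⟨i, ℓ, rfl, rfl⟩
    · exact Or.inl ⟨i, j, hij, rfl, rfl⟩
    · exact Or.inr ⟨i, ℓ, Or.inl ⟨rfl, rfl⟩⟩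
  · rcases h with ⟨i, j, hij, rfl, rfl⟩ | ⟨i, ℓ, rfl, rfl⟩
    · exact Or.inl ⟨j, i, hij.symm, rfl, rfl⟩
    · exact Or.inr ⟨i, ℓ, Or.inr ⟨rfl, rfl⟩⟩

lemma edge_le_P0 : edgeIdeal k (whiskerGraph n a) ≤ P0 k n a := by
  rw [edgeIdeal, Ideal.span_le]
  rintro g ⟨u, v, hadj, rfl⟩
  rcases adj_cases n a hadj with ⟨i, j, hij, rfl, rfl⟩ | ⟨i, ℓ, ⟨rfl, rfl⟩ | ⟨rfl, rfl⟩⟩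
  · exact Ideal.mul_mem_right _ _ (Ideal.subset_span ⟨Sum.inl i, ⟨i, rfl⟩, rfl⟩)
  · exact Ideal.mul_mem_right _ _ (Ideal.subset_span ⟨Sum.inl i, ⟨i, rfl⟩, rfl⟩)
  · exact Ideal.mul_mem_left _ _ (Ideal.subset_span ⟨Sum.inl i, ⟨i, rfl⟩, rfl⟩)

lemma edge_le_PP (i : Fin n) : edgeIdeal k (whiskerGraph n a) ≤ PP k n a i := by
  rw [edgeIdeal, Ideal.span_le]
  rintro g ⟨u, v, hadj, rfl⟩
  rcases adj_cases n a hadj with ⟨i₁, j₁, hij, rfl, rfl⟩ | ⟨i₁, ℓ, ⟨rfl, rfl⟩ | ⟨rfl, rfl⟩⟩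
  · by_cases h1 : i₁ ≠ i
    · exact Ideal.mul_mem_right _ _ (Ideal.subset_span ⟨Sum.inl i₁, h1, rfl⟩)
    · push_neg at h1
      subst h1
      exact Ideal.mul_mem_left _ _
        (Ideal.subset_span ⟨Sum.inl j₁, Ne.symm hij, rfl⟩)
  · by_cases h1 : i₁ ≠ i
    · exact Ideal.mul_mem_right _ _ (Ideal.subset_span ⟨Sum.inl i₁, h1, rfl⟩)
    · push_neg at h1
      subst h1
      exact Ideal.mul_mem_left _ _ (Ideal.subset_span ⟨Sum.inr ⟨i₁, ℓ⟩, rfl, rfl⟩)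
  · by_cases h1 : i₁ ≠ i
    · exact Ideal.mul_mem_left _ _ (Ideal.subset_span ⟨Sum.inl i₁, h1, rfl⟩)
    · push_neg at h1
      subst h1
      exact Ideal.mul_mem_right _ _ (Ideal.subset_span ⟨Sum.inr ⟨i₁, ℓ⟩, rfl, rfl⟩)

lemma X_inl_not_mem_PP (i : Fin n) :
    (X (Sum.inl i) : MvPolynomial (Vt n a) k) ∉ PP k n a i := by
  rw [PP, X_mem_span_iff]
  exact fun h => h rfl

lemma y_mem_PP (i : Fin n) (ℓ : Fin (a i)) :
    (X (Sum.inr ⟨i, ℓ⟩) : MvPolynomial (Vt n a) k) ∈ PP k n a i :=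
  Ideal.subset_span ⟨Sum.inr ⟨i, ℓ⟩, rfl, rfl⟩

lemma y_not_mem_P0 (i : Fin n) (ℓ : Fin (a i)) :
    (X (Sum.inr ⟨i, ℓ⟩) : MvPolynomial (Vt n a) k) ∉ P0 k n a := by
  rw [P0, X_mem_span_iff]
  rintro ⟨j, hj⟩
  exact Sum.inl_ne_inr hj

lemma y_not_mem_PP {i j : Fin n} (h : i ≠ j) (ℓ : Fin (a i)) :
    (X (Sum.inr ⟨i, ℓ⟩) : MvPolynomial (Vt n a) k) ∉ PP k n a j := by
  rw [PP, X_mem_span_iff]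
  exact fun hc => h hc

lemma prime_le_cases {q : Ideal (MvPolynomial (Vt n a) k)} (hq : q.IsPrime)
    (hIq : edgeIdeal k (whiskerGraph n a) ≤ q) :
    P0 k n a ≤ q ∨ ∃ i, PP k n a i ≤ q := by
  by_cases hx : ∀ i : Fin n, (X (Sum.inl i) : MvPolynomial (Vt n a) k) ∈ q
  · left
    rw [P0, Ideal.span_le]
    rintro g ⟨v, ⟨i, rfl⟩, rfl⟩
    exact hx i
  · right
    push_neg at hx
    obtain ⟨i, hi⟩ := hx
    refine ⟨i, ?_⟩
    rw [PP, Ideal.span_le]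
    rintro g ⟨v, hv, rfl⟩
    rcases v with j | ⟨j, ℓ⟩
    · have hji : j ≠ i := hv
      have hedge := hIq (edge_mem k n a (adj_xx n a (Ne.symm hji)))
      exact (hq.mem_or_mem hedge).resolve_left hi
    · have hji : j = i := hv
      subst hji
      have hedge := hIq (edge_mem k n a (adj_xy n a j ℓ))
      exact (hq.mem_or_mem hedge).resolve_left hi

lemma minimalPrimes_eq (ha : ∀ i, 1 ≤ a i) :
    (edgeIdeal k (whiskerGraph n a)).minimalPrimes
      = insert (P0 k n a) (Set.range (PP k n a)) := by
  have hP0p : (P0 k n a).IsPrime := span_X_isPrime _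
  have hPPp : ∀ i, (PP k n a i).IsPrime := fun i => span_X_isPrime _
  ext p
  constructor
  · rintro ⟨⟨hp, hIp⟩, hmin⟩
    rcases prime_le_cases k n a hp hIp with h | ⟨i, h⟩
    · exact Or.inl (le_antisymm (hmin ⟨hP0p, edge_le_P0 k n a⟩ h) h)
    · exact Or.inr ⟨i, (le_antisymm (hmin ⟨hPPp i, edge_le_PP k n a i⟩ h) h).symm⟩
  · intro hp
    rcases hp with rfl | ⟨i, rfl⟩
    · refine ⟨⟨hP0p, edge_le_P0 k n a⟩, ?_⟩
      rintro q ⟨hq, hIq⟩ hqle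
      rcases prime_le_cases k n a hq hIq with h | ⟨i, h⟩
      · exact h
      · exact absurd (hqle (h (y_mem_PP k n a i ⟨0, ha i⟩)))
          (y_not_mem_P0 k n a i ⟨0, ha i⟩)
    · refine ⟨⟨hPPp i, edge_le_PP k n a i⟩, ?_⟩
      rintro q ⟨hq, hIq⟩ hqle
      rcases prime_le_cases k n a hq hIq with h | ⟨i', h⟩
      · exact absurd (hqle (h (Ideal.subset_span ⟨Sum.inl i, ⟨i, rfl⟩, rfl⟩)))
          (X_inl_not_mem_PP k n a i)
      · by_cases hii : i' = i
        · subst hii; exact h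
        · exact absurd (hqle (h (y_mem_PP k n a i' ⟨0, ha i'⟩)))
            (y_not_mem_PP k n a hii ⟨0, ha i'⟩)

end Stmt13

namespace Stmt13

attribute [local instance 0] Classical.propDecidable

variable (k : Type) [Field k] (n : ℕ) (a : Fin n → ℕ)


lemma prod_X_eq_monomial {V ι : Type} (t : Finset ι) (g : ι → V) :
    (∏ j ∈ t, X (g j) : MvPolynomial V k) = monomial (∑ j ∈ t, Finsupp.single (g j) 1) 1 := by
  classical
  induction t using Finset.induction_on with
  | empty => simp
  | insert _ _ h ih =>
    rw [Finset.prod_insert h, Finset.sum_insert h, ih, X, monomial_mul, one_mul]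

lemma wt_sum {V ι : Type} (S : Set V) (t : Finset ι) (g : ι → (V →₀ ℕ)) :
    wt S (∑ j ∈ t, g j) = ∑ j ∈ t, wt S (g j) := by
  classical
  induction t using Finset.induction_on with
  | empty => simp [wt_zero]
  | insert _ _ h ih => rw [Finset.sum_insert h, Finset.sum_insert h, wt_add, ih]

def d0 : Vt n a →₀ ℕ := ∑ j : Fin n, Finsupp.single (Sum.inl j) 1

lemma wt_d0_S0 : wt (S0 n a) (d0 n a) = n := by
  rw [d0, wt_sum]
  rw [Finset.sum_congr rfl (fun j _ => by rw [wt_single, if_pos ⟨j, rfl⟩])]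
  simp

lemma wt_d0_SP (i : Fin n) : wt (SP n a i) (d0 n a) + 1 = n := by
  rw [d0, wt_sum]
  have key : ∀ j : Fin n,
      wt (SP n a i) (Finsupp.single (Sum.inl j) 1) = if j = i then 0 else 1 := by
    intro j
    rw [wt_single]
    by_cases h : j = i
    · rw [if_neg, if_pos h]
      exact fun hc => hc h
    · rw [if_pos (show Sum.inl j ∈ SP n a i from h), if_neg h]
  rw [Finset.sum_congr rfl fun j _ => key j]
  have h1 : ∑ j : Fin n, ((if j = i then 0 else 1) + (if j = i then 1 else 0)) = n := by
    have h0 : ∀ j : Fin n, ((if j = i then 0 else 1) + (if j = i then 1 else 0)) = 1 :=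
      fun j => by split <;> rfl
    rw [Finset.sum_congr rfl fun j _ => h0 j]
    simp
  rw [Finset.sum_add_distrib] at h1
  have h2 : ∑ j : Fin n, (if j = i then (1:ℕ) else 0) = 1 := by
    rw [Finset.sum_ite_eq' Finset.univ i (fun _ => (1:ℕ))]
    simp
  omega

lemma mul_xprod_mem_P0pow (f : MvPolynomial (Vt n a) k) :
    f * monomial (d0 n a) 1 ∈ (P0 k n a) ^ n := by
  classical
  rw [P0, mem_pow_iff]
  intro m hm
  obtain ⟨m₁, _, m₂, hm₂, rfl⟩ := Finset.mem_add.1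
    (MvPolynomial.support_mul _ _ hm)
  rw [MvPolynomial.support_monomial, if_neg one_ne_zero, Finset.mem_singleton] at hm₂
  subst hm₂
  rw [wt_add, wt_d0_S0]
  omega

lemma mul_xprod_mem_PPpow_iff (i : Fin n) (f : MvPolynomial (Vt n a) k) :
    f * monomial (d0 n a) 1 ∈ (PP k n a i) ^ n ↔ f ∈ PP k n a i := by
  classical
  have hwd := wt_d0_SP n a i
  constructor
  · intro h
    rw [PP, mem_span_X_iff]
    intro m hm
    have hc : coeff (m + d0 n a) (f * monomial (d0 n a) 1) = coeff m f := by
      rw [coeff_mul_monomial, mul_one]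
    have hmem : m + d0 n a ∈ (f * monomial (d0 n a) 1).support := by
      rw [MvPolynomial.mem_support_iff, hc]
      exact MvPolynomial.mem_support_iff.1 hm
    have := (mem_pow_iff _ n _).1 (by rw [PP] at h; exact h) _ hmem
    rw [wt_add] at this
    omega
  · intro h
    rw [PP, mem_pow_iff]
    intro m hm
    obtain ⟨m₁, hm₁, m₂, hm₂, rfl⟩ := Finset.mem_add.1
      (MvPolynomial.support_mul _ _ hm)
    rw [MvPolynomial.support_monomial, if_neg one_ne_zero, Finset.mem_singleton] at hm₂
    subst hm₂
    have h1 : 1 ≤ wt (SP n a i) m₁ := by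
      rw [PP, mem_span_X_iff] at h
      exact h m₁ hm₁
    rw [wt_add]
    omega

lemma monomial_mem_of_le {V : Type} {I : Ideal (MvPolynomial V k)} {d m : V →₀ ℕ}
    (hle : d ≤ m) (h : (monomial d 1 : MvPolynomial V k) ∈ I) (c : k) :
    (monomial m c : MvPolynomial V k) ∈ I := by
  have heq : (monomial m c : MvPolynomial V k) = monomial d 1 * monomial (m - d) c := by
    rw [monomial_mul, one_mul, add_tsub_cancel_of_le hle]
  rw [heq]
  exact Ideal.mul_mem_right _ _ h

lemma iInf_PP_eq :
    (⨅ i : Fin n, PP k n a i) = edgeIdeal k (whiskerGraph n a) ⊔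
      ∏ i : Fin n, Ideal.span (Set.range fun ℓ : Fin (a i) =>
        (X (Sum.inr ⟨i, ℓ⟩) : MvPolynomial (Vt n a) k)) := by
  classical
  apply le_antisymm
  · intro f hf
    rw [Submodule.mem_iInf] at hf
    have hm : ∀ m ∈ f.support, ∀ i : Fin n, ∃ v, v ∈ SP n a i ∧ m v ≠ 0 := by
      intro m hm i
      have := (mem_span_X_iff (SP n a i) f).1 (by have h2 := hf i; rwa [PP] at h2) m hm
      exact exists_of_wt_pos this
    rw [MvPolynomial.as_sum f]
    refine Ideal.sum_mem _ fun m hmf => ?_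
    by_cases hx : ∃ i : Fin n, m (Sum.inl i) ≠ 0
    · -- contains some x_i; combined with SP i condition get an edge
      obtain ⟨i, hi⟩ := hx
      obtain ⟨v, hv, hmv⟩ := hm m hmf i
      apply Ideal.mem_sup_left
      have hne : v ≠ Sum.inl i := by
        rintro rfl
        exact hv rfl
      have hadj : (whiskerGraph n a).Adj (Sum.inl i) v := by
        rcases v with j | ⟨j, ℓ⟩
        · exact adj_xx n a (Ne.symm hv)
        · have : j = i := hv
          subst this
          exact adj_xy n a j ℓ
      have hle : Finsupp.single (Sum.inl i) 1 + Finsupp.single v 1 ≤ m := by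
        rw [Finsupp.le_def]
        intro u
        rw [Finsupp.add_apply, Finsupp.single_apply, Finsupp.single_apply]
        split_ifs with h1 h2 h2
        · exact absurd (h2.trans h1.symm) hne
        · rw [← h1]
          have := Nat.one_le_iff_ne_zero.2 hi
          omega
        · rw [← h2]
          have := Nat.one_le_iff_ne_zero.2 hmv
          omega
        · omega
      refine monomial_mem_of_le k hle ?_ _
      have hXX : (monomial (Finsupp.single (Sum.inl i) 1 + Finsupp.single v 1) 1 :
          MvPolynomial (Vt n a) k) = X (Sum.inl i) * X v := by
        rw [X, X, monomial_mul, one_mul]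
      rw [hXX]
      exact edge_mem k n a hadj
    · -- no x variables: pick a y variable for each i
      push_neg at hx
      apply Ideal.mem_sup_right
      have hy : ∀ i : Fin n, ∃ ℓ : Fin (a i), m (Sum.inr ⟨i, ℓ⟩) ≠ 0 := by
        intro i
        obtain ⟨v, hv, hmv⟩ := hm m hmf i
        rcases v with j | ⟨j, ℓ⟩
        · exact absurd (hx j) hmv
        · have : j = i := hv
          subst this
          exact ⟨ℓ, hmv⟩
      choose g hg using hy
      have hle : (∑ i : Fin n, Finsupp.single (Sum.inr ⟨i, g i⟩ : Vt n a) 1) ≤ m := by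
        rw [Finsupp.le_def]
        intro u
        rw [Finsupp.finset_sum_apply]
        by_cases hu : ∃ i₀ : Fin n, (Sum.inr ⟨i₀, g i₀⟩ : Vt n a) = u
        · obtain ⟨i₀, hi₀⟩ := hu
          have hsum : ∑ i : Fin n, (Finsupp.single (Sum.inr ⟨i, g i⟩ : Vt n a) 1) u = 1 := by
            rw [Finset.sum_eq_single_of_mem i₀ (Finset.mem_univ _)]
            · rw [Finsupp.single_apply, if_pos hi₀]
            · intro j _ hj
              rw [Finsupp.single_apply, if_neg]
              intro hc
              apply hj
              have := hc.trans hi₀.symm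
              have hfst := congrArg (fun w => Sum.elim (fun _ : Fin n => j)
                (fun p : Σ i : Fin n, Fin (a i) => p.1) w) this
              exact hfst
          rw [hsum, ← hi₀]
          exact Nat.one_le_iff_ne_zero.2 (hg i₀)
        · push_neg at hu
          have hsum : ∑ i : Fin n, (Finsupp.single (Sum.inr ⟨i, g i⟩ : Vt n a) 1) u = 0 := by
            refine Finset.sum_eq_zero fun j _ => ?_
            rw [Finsupp.single_apply, if_neg (hu j)]
          rw [hsum]
          exact Nat.zero_le _
      refine monomial_mem_of_le k hle ?_ _
      rw [← prod_X_eq_monomial]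
      exact Ideal.prod_mem_prod fun i _ => Ideal.subset_span ⟨g i, rfl⟩
  · refine sup_le (le_iInf fun i => edge_le_PP k n a i) (le_iInf fun i => ?_)
    refine le_trans (le_trans Ideal.prod_le_inf (Finset.inf_le (Finset.mem_univ i))) ?_
    rw [Ideal.span_le]
    rintro g ⟨ℓ, rfl⟩
    exact y_mem_PP k n a i ℓ

end Stmt13


end AuxStmt13

/-- For the whisker graph `W_a` with all `a i ≥ 1`,
`I(W_a)^{(n)} : (x_1⋯x_n) = I(W_a) + (y_{1,1},…,y_{1,a_1})⋯(y_{n,1},…,y_{n,a_n})`. -/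
theorem stmt13 (k : Type) [Field k] (n : ℕ) (a : Fin n → ℕ) (ha : ∀ i, 1 ≤ a i) :
    (symbolicPower (edgeIdeal k (whiskerGraph n a)) n).colon
        (Ideal.span {∏ i : Fin n,
          (X (Sum.inl i) : MvPolynomial (Fin n ⊕ Σ i : Fin n, Fin (a i)) k)}) =
      edgeIdeal k (whiskerGraph n a) ⊔
        ∏ i : Fin n, Ideal.span (Set.range fun ℓ : Fin (a i) =>
          (X (Sum.inr ⟨i, ℓ⟩) : MvPolynomial (Fin n ⊕ Σ i : Fin n, Fin (a i)) k)) := by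
  classical
  have hxp : (∏ i : Fin n, (X (Sum.inl i) : MvPolynomial (Stmt13.Vt n a) k))
      = monomial (Stmt13.d0 n a) 1 := by
    rw [Stmt13.prod_X_eq_monomial]
    rfl
  have hsym : symbolicPower (edgeIdeal k (whiskerGraph n a)) n
      = (Stmt13.P0 k n a) ^ n ⊓ ⨅ i, (Stmt13.PP k n a i) ^ n := by
    rw [symbolicPower, Stmt13.minimalPrimes_eq k n a ha, iInf_insert, iInf_range]
  ext f
  rw [Ideal.mem_colon_span_singleton, hsym, hxp, ← Stmt13.iInf_PP_eq k n a, Submodule.mem_inf]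
  constructor
  · rintro ⟨-, h2⟩
    rw [Submodule.mem_iInf] at h2 ⊢
    exact fun i => (Stmt13.mul_xprod_mem_PPpow_iff k n a i f).1 (h2 i)
  · intro h
    rw [Submodule.mem_iInf] at h
    exact ⟨Stmt13.mul_xprod_mem_P0pow k n a f,
      Submodule.mem_iInf _ |>.2 fun i => (Stmt13.mul_xprod_mem_PPpow_iff k n a i f).2 (h i)⟩
end

section
/- Let Δ be the simplicial complex on vertex set {x_1,...,x_n} ∪ {y_{i,ℓ}} whose facets are F_i = {x_i} ∪ {y_{j,ℓ} : j ≠ i, 1 ≤ ℓ ≤ a_j} for i = 1,...,n, where all a_i ≥ 1 and n ≥ 2. Then the reduced homology H̃_{n−2}(Δ; k) is nonzero. -/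
/-- The space of (reduced, ordered) simplicial `q`-chains with coefficients in `k`:
the free `k`-module on the faces with exactly `q` vertices (so `q = 0` corresponds to the
empty face, giving reduced homology). -/
abbrev Chains (k V : Type) [Field k] (isFace : Finset V → Prop) (q : ℕ) : Type :=
  {F : Finset V // isFace F ∧ F.card = q} →₀ k

/-- The simplicial boundary map, with the usual alternating signs determined by a linear
order on the vertices. -/
noncomputable def boundary (k V : Type) [Field k] [LinearOrder V] [DecidableEq V] (isFace : Finset V → Prop)
    (hdc : ∀ F : Finset V, ∀ v : V, isFace F → isFace (F.erase v)) (q : ℕ) :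
    Chains k V isFace (q + 1) →ₗ[k] Chains k V isFace q :=
  Finsupp.lsum k fun F =>
    LinearMap.toSpanSingleton k _
      (∑ v ∈ F.1.attach, ((-1 : k) ^ (F.1.filter (· < v.1)).card) •
        Finsupp.single
          (⟨F.1.erase v.1, hdc F.1 v.1 F.2.1, by
            simp [Finset.card_erase_of_mem v.2, F.2.2]⟩ :
            {F : Finset V // isFace F ∧ F.card = q})
          (1 : k))

/-- The faces of the simplicial complex `Δ` whose facets are
`F_i = {x_i} ∪ {y_{j,ℓ} : j ≠ i}`. -/
def deltaFace (n : ℕ) (a : Fin n → ℕ) (F : Finset (Fin n ⊕ Σ i : Fin n, Fin (a i))) : Prop :=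
  ∃ i : Fin n, (F : Set (Fin n ⊕ Σ i : Fin n, Fin (a i))) ⊆
    {Sum.inl i} ∪ Sum.inr '' {p : Σ i : Fin n, Fin (a i) | p.1 ≠ i}

theorem deltaFace_downClosed (n : ℕ) (a : Fin n → ℕ) :
    ∀ F : Finset (Fin n ⊕ Σ i : Fin n, Fin (a i)), ∀ v, deltaFace n a F →
      deltaFace n a (F.erase v) := by
  rintro F v ⟨i, hi⟩
  exact ⟨i, (Finset.coe_subset.mpr (Finset.erase_subset v F)).trans hi⟩

/-! ### Auxiliary generic combinatorial lemmas -/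

section GenericSign

variable {V : Type} [LinearOrder V] [DecidableEq V]

lemma neg_one_pow_eq_of {k : Type} [Field k] {m m' b b' : ℕ} (h : m + 2*b = m' + 2*b') :
    (-1 : k)^m = (-1)^m' := by
  have h1 : ((-1:k))^(m + 2*b) = (-1)^(m'+2*b') := by rw [h]
  rw [pow_add, pow_add, pow_mul, pow_mul] at h1
  simpa using h1

/-- `pos S v` is the number of elements of `S` smaller than `v`. -/
def pos (S : Finset V) (v : V) : ℕ := (S.filter (· < v)).card

/-- number of inversions of `D` on `F` -/
def inversions (D : V → ℕ) (F : Finset V) : ℕ :=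
  ∑ t ∈ F, (F.filter fun s => s < t ∧ D t < D s).card

lemma inversions_erase (D : V → ℕ) (F : Finset V) (x : V) (hx : x ∈ F) :
    inversions D F = inversions D (F.erase x)
      + ((F.filter fun s => s < x ∧ D x < D s).card
        + (F.filter fun t => x < t ∧ D t < D x).card) := by
  have h1 : ∀ t ∈ F.erase x, (F.filter fun s => s < t ∧ D t < D s).card
      = ((F.erase x).filter fun s => s < t ∧ D t < D s).card
        + (if x < t ∧ D t < D x then 1 else 0) := by
    intro t ht
    conv_lhs => rw [← Finset.insert_erase hx]
    rw [Finset.filter_insert]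
    split_ifs with h
    · rw [Finset.card_insert_of_notMem
        (fun hc => (Finset.notMem_erase x F) (Finset.mem_of_mem_filter _ hc))]
    · rfl
  have h2 : ((F.erase x).filter fun t => x < t ∧ D t < D x)
      = F.filter fun t => x < t ∧ D t < D x := by
    rw [Finset.filter_erase]
    exact Finset.erase_eq_of_notMem (by simp)
  calc inversions D F
      = (F.filter fun s => s < x ∧ D x < D s).card
        + ∑ t ∈ F.erase x, (F.filter fun s => s < t ∧ D t < D s).card := by
        rw [inversions]; exact (Finset.add_sum_erase F _ hx).symm
    _ = (F.filter fun s => s < x ∧ D x < D s).card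
        + (inversions D (F.erase x)
          + ∑ t ∈ F.erase x, (if x < t ∧ D t < D x then 1 else 0)) := by
        rw [Finset.sum_congr rfl h1, Finset.sum_add_distrib]; rfl
    _ = _ := by
        rw [← Finset.card_filter, h2]; ring

lemma master_lt {k : Type} [Field k] (D : V → ℕ) (G : Finset V) (u w : V)
    (hu : u ∈ G) (hw : w ∈ G) (hlt : u < w) (hd : D u = D w)
    (honly : ∀ t ∈ G, D t = D u → t = u ∨ t = w) :
    (-1:k)^(pos G u + inversions D (G.erase u))
      = -(-1:k)^(pos G w + inversions D (G.erase w)) := by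
  rw [pos, pos]
  have E1 : (G.filter (· < u)).card
      = (G.filter fun t => t < u ∧ D t < D u).card
        + (G.filter fun s => s < u ∧ D u < D s).card := by
    rw [Finset.card_filter, Finset.card_filter, Finset.card_filter, ← Finset.sum_add_distrib]
    refine Finset.sum_congr rfl fun t ht => ?_
    by_cases h : t < u
    · have hne : D t ≠ D u := fun h2 =>
        (honly t ht h2).elim (fun e => absurd h (by simp [e]))
          (fun e => absurd (h.trans hlt) (by simp [e]))
      simp only [h, true_and, if_true]
      split_ifs <;> omega
    · simp [h]
  have E2 : (G.filter (· < w)).card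
      = (G.filter fun t => t < w ∧ D t < D u).card + 1
        + (G.filter fun s => s < w ∧ D u < D s).card := by
    have hmid : (G.filter fun t => t < w ∧ D t = D u) = {u} := by
      ext t
      simp only [Finset.mem_filter, Finset.mem_singleton]
      constructor
      · rintro ⟨ht, hlt', hdt⟩
        rcases honly t ht hdt with rfl | rfl
        · rfl
        · exact absurd hlt' (lt_irrefl _)
      · rintro rfl; exact ⟨hu, hlt, rfl⟩
    have hmidc : (G.filter fun t => t < w ∧ D t = D u).card = 1 := by
      rw [hmid, Finset.card_singleton]
    rw [← hmidc, Finset.card_filter, Finset.card_filter, Finset.card_filter,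
      Finset.card_filter, ← Finset.sum_add_distrib, ← Finset.sum_add_distrib]
    refine Finset.sum_congr rfl fun t ht => ?_
    by_cases h : t < w
    · simp only [h, true_and, if_true]
      split_ifs <;> omega
    · simp [h]
  have E3 : (G.filter fun t => D t < D u).card
      = (G.filter fun t => t < u ∧ D t < D u).card
        + (G.filter fun t => u < t ∧ D t < D u).card := by
    rw [Finset.card_filter, Finset.card_filter, Finset.card_filter, ← Finset.sum_add_distrib]
    refine Finset.sum_congr rfl fun t ht => ?_
    rcases lt_trichotomy t u with h | h | h
    · simp [h, asymm h]
    · subst h; simp [lt_irrefl]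
    · simp [h, asymm h]
  have E4 : (G.filter fun t => D t < D u).card
      = (G.filter fun t => t < w ∧ D t < D u).card
        + (G.filter fun t => w < t ∧ D t < D u).card := by
    rw [Finset.card_filter, Finset.card_filter, Finset.card_filter, ← Finset.sum_add_distrib]
    refine Finset.sum_congr rfl fun t ht => ?_
    rcases lt_trichotomy t w with h | h | h
    · simp [h, asymm h]
    · subst h; simp [← hd, lt_irrefl]
    · simp [h, asymm h]
  have E5 := inversions_erase D G u hu
  have E6 := inversions_erase D G w hw
  rw [← hd] at E6
  have key : ((G.filter (· < u)).card + inversions D (G.erase u))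
      + 2*((G.filter fun t => u < t ∧ D t < D u).card + 1)
      = (((G.filter (· < w)).card + inversions D (G.erase w)) + 1)
      + 2*((G.filter fun t => w < t ∧ D t < D u).card) := by
    omega
  rw [neg_one_pow_eq_of key, pow_succ]
  ring

lemma master {k : Type} [Field k] (D : V → ℕ) (G : Finset V) (u w : V)
    (hu : u ∈ G) (hw : w ∈ G) (hne : u ≠ w) (hd : D u = D w)
    (honly : ∀ t ∈ G, D t = D u → t = u ∨ t = w) :
    (-1:k)^(pos G u + inversions D (G.erase u))
      = -(-1:k)^(pos G w + inversions D (G.erase w)) := by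
  rcases hne.lt_or_gt with h | h
  · exact master_lt D G u w hu hw h hd honly
  · have := master_lt (k := k) D G w u hw hu h hd.symm
      (fun t ht hdt => ((honly t ht (hdt.trans hd.symm)).symm))
    rw [this]; ring

lemma swap_sign_lt {k : Type} [Field k] (S : Finset V) (u w : V)
    (hu : u ∈ S) (hw : w ∈ S) (hlt : u < w) :
    (-1:k)^(pos S u + pos (S.erase u) w)
      = -(-1:k)^(pos S w + pos (S.erase w) u) := by
  rw [pos, pos, pos, pos]
  have h1 : ((S.erase u).filter (· < w)).card + 1 = (S.filter (· < w)).card := by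
    rw [Finset.filter_erase, Finset.card_erase_of_mem (by simp [hu, hlt])]
    have : 0 < (S.filter (· < w)).card :=
      Finset.card_pos.mpr ⟨u, by simp [hu, hlt]⟩
    omega
  have h2 : ((S.erase w).filter (· < u)).card = (S.filter (· < u)).card := by
    rw [Finset.filter_erase]
    congr 1
    exact Finset.erase_eq_of_notMem (by simp [asymm hlt])
  have key : ((S.filter (· < u)).card + ((S.erase u).filter (· < w)).card) + 2*1
      = (((S.filter (· < w)).card + ((S.erase w).filter (· < u)).card) + 1) + 2*0 := by
    omega
  rw [neg_one_pow_eq_of key, pow_succ]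
  ring

lemma swap_sign {k : Type} [Field k] (S : Finset V) (u w : V)
    (hu : u ∈ S) (hw : w ∈ S) (hne : u ≠ w) :
    (-1:k)^(pos S u + pos (S.erase u) w)
      = -(-1:k)^(pos S w + pos (S.erase w) u) := by
  rcases hne.lt_or_gt with h | h
  · exact swap_sign_lt S u w hu hw h
  · rw [swap_sign_lt S w u hw hu h]; ring

lemma boundary_single (k : Type) [Field k] (isFace : Finset V → Prop)
    (hdc : ∀ F : Finset V, ∀ v : V, isFace F → isFace (F.erase v)) (q : ℕ)
    (X : {F : Finset V // isFace F ∧ F.card = q + 1}) (c : k) :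
    boundary k V isFace hdc q (Finsupp.single X c)
      = c • ∑ v ∈ X.1.attach, ((-1 : k) ^ (X.1.filter (· < v.1)).card) •
          Finsupp.single
            (⟨X.1.erase v.1, hdc X.1 v.1 X.2.1, by
              simp [Finset.card_erase_of_mem v.2, X.2.2]⟩ :
              {F : Finset V // isFace F ∧ F.card = q}) (1 : k) := by
  rw [boundary, Finsupp.lsum_single, LinearMap.toSpanSingleton_apply]

end GenericSign

/-! ### The Δ-specific part -/

section Delta

variable (n : ℕ) (a : Fin n → ℕ)

abbrev Vert (n : ℕ) (a : Fin n → ℕ) : Type := Fin n ⊕ Σ i : Fin n, Fin (a i)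

/-- The "colour projection with shift on the `x`-part". -/
def DD : Vert n a → ℕ := Sum.elim (fun i => i.val + 1) (fun p => p.1.val)

variable [LinearOrder (Vert n a)]

/-- The cocycle evaluated on a face. -/
noncomputable def phi (k : Type) [Field k] (F : Finset (Vert n a)) : k :=
  if F.image (DD n a) = Finset.Icc 1 (n-1) then (-1)^(inversions (DD n a) F) else 0

omit [LinearOrder (Vert n a)] in
/-- There is no face `G` of cardinality `n` on which `DD` is injective such that
some deleted face has `DD`-image `{1,…,n-1}`. -/
lemma no_good (hn : 2 ≤ n) (G : Finset (Vert n a)) (hf : deltaFace n a G)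
    (hc : G.card = n) (hinj : Set.InjOn (DD n a) ↑G) (v : Vert n a) (hv : v ∈ G) :
    (G.erase v).image (DD n a) ≠ Finset.Icc 1 (n-1) := by
  obtain ⟨i, hGi⟩ := hf
  set T : Finset ℕ := insert (i.val + 1) ((Finset.range n).erase i.val) with hT
  have h1 : G.image (DD n a) ⊆ T := by
    intro m hm
    obtain ⟨t, ht, rfl⟩ := Finset.mem_image.mp hm
    rcases hGi ht with h | ⟨p, hp, rfl⟩
    · simp only [Set.mem_singleton_iff] at h
      subst h
      simp [DD, hT]
    · simp only [Set.mem_setOf_eq] at hp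
      have : (p.1 : ℕ) ∈ (Finset.range n).erase i.val := by
        simp [Finset.mem_erase, Fin.val_ne_of_ne hp, p.1.isLt]
      simp [DD, hT, Finset.mem_insert, this]
  have h2 : (G.image (DD n a)).card = n := by
    rw [Finset.card_image_iff.mpr hinj, hc]
  have h3 : T.card ≤ n := by
    have : ((Finset.range n).erase i.val).card = n - 1 := by
      rw [Finset.card_erase_of_mem (by simp [i.isLt]), Finset.card_range]
    calc T.card ≤ ((Finset.range n).erase i.val).card + 1 := Finset.card_insert_le _ _
      _ ≤ n := by omega
  have hTeq : G.image (DD n a) = T :=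
    Finset.eq_of_subset_of_card_le h1 (by omega)
  have hcT : T.card = n := by rw [← hTeq, h2]
  have hnotmem : (i.val + 1) ∉ (Finset.range n).erase i.val := by
    intro hmem
    have : T.card = n - 1 := by
      rw [hT, Finset.insert_eq_self.mpr hmem,
        Finset.card_erase_of_mem (by simp [i.isLt]), Finset.card_range]
    omega
  have hi : i.val = n - 1 := by
    simp only [Finset.mem_erase, Finset.mem_range] at hnotmem
    push_neg at hnotmem
    rcases Nat.lt_or_ge (i.val + 1) n with h | h
    · omega
    · have := i.isLt; omega
  intro hbad
  have hmem : (n - 1) ∈ (G.erase v).image (DD n a) := by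
    rw [hbad]; simp; omega
  have : (n-1) ∈ T := hTeq ▸ (Finset.image_subset_image (Finset.erase_subset v G) hmem)
  rw [hT, hi] at this
  simp only [Finset.mem_insert, Finset.mem_erase, Finset.mem_range] at this
  omega

/-- The key combinatorial cocycle identity. -/
lemma key_sum (k : Type) [Field k] (hn : 2 ≤ n) (G : Finset (Vert n a))
    (hf : deltaFace n a G) (hc : G.card = n) :
    ∑ v ∈ G, (-1:k)^(pos G v) * phi n a k (G.erase v) = 0 := by
  by_cases hex : ∃ v ∈ G, (G.erase v).image (DD n a) = Finset.Icc 1 (n-1)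
  · obtain ⟨v, hv, hgood⟩ := hex
    have hcardIcc : (Finset.Icc 1 (n-1)).card = n - 1 := by
      rw [Nat.card_Icc]; omega
    have hinj' : Set.InjOn (DD n a) ↑(G.erase v) := by
      apply Finset.card_image_iff.mp
      rw [hgood, hcardIcc, Finset.card_erase_of_mem hv, hc]
    have hninj : ¬ Set.InjOn (DD n a) ↑G := fun hI => no_good n a hn G hf hc hI v hv hgood
    have hpair : ∃ w ∈ G, w ≠ v ∧ DD n a w = DD n a v := by
      by_contra hno
      push_neg at hno
      apply hninj
      intro x hx y hy hxy
      rcases eq_or_ne x v with h | hxv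
      · rcases eq_or_ne y v with h2 | hyv
        · rw [h, h2]
        · exact absurd (by rw [← h]; exact hxy.symm) (hno y hy hyv)
      · rcases eq_or_ne y v with h2 | hyv
        · exact absurd (by rw [← h2]; exact hxy) (hno x hx hxv)
        · exact hinj' (by simp [Finset.mem_coe, Finset.mem_erase, hxv, hx])
            (by simp [Finset.mem_coe, Finset.mem_erase, hyv, hy]) hxy
    obtain ⟨w, hw, hwv, hdw⟩ := hpair
    have honly : ∀ t ∈ G, DD n a t = DD n a v → t = v ∨ t = w := by
      intro t ht hdt
      rcases eq_or_ne t v with rfl | htv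
      · exact Or.inl rfl
      · right
        exact hinj' (by simp [Finset.mem_coe, Finset.mem_erase, htv, ht])
          (by simp [Finset.mem_coe, Finset.mem_erase, hwv, hw]) (hdt.trans hdw.symm)
    have himeq : (G.erase w).image (DD n a) = (G.erase v).image (DD n a) := by
      apply Finset.Subset.antisymm
      · intro m hm
        obtain ⟨t, ht, rfl⟩ := Finset.mem_image.mp hm
        rw [Finset.mem_erase] at ht
        rcases eq_or_ne t v with h | htv
        · refine Finset.mem_image.mpr ⟨w, Finset.mem_erase.mpr ⟨hwv, hw⟩, ?_⟩
          rw [h]; exact hdw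
        · exact Finset.mem_image.mpr ⟨t, Finset.mem_erase.mpr ⟨htv, ht.2⟩, rfl⟩
      · intro m hm
        obtain ⟨t, ht, rfl⟩ := Finset.mem_image.mp hm
        rw [Finset.mem_erase] at ht
        rcases eq_or_ne t w with h | htw
        · refine Finset.mem_image.mpr ⟨v, Finset.mem_erase.mpr ⟨Ne.symm hwv, hv⟩, ?_⟩
          rw [h]; exact hdw.symm
        · exact Finset.mem_image.mpr ⟨t, Finset.mem_erase.mpr ⟨htw, ht.2⟩, rfl⟩
    have hgoodw : (G.erase w).image (DD n a) = Finset.Icc 1 (n-1) := himeq.trans hgood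
    have hzero : ∀ t ∈ G, t ≠ v → t ≠ w → phi n a k (G.erase t) = 0 := by
      intro t ht htv htw
      rw [phi, if_neg]
      intro hbad
      have hinjt : Set.InjOn (DD n a) ↑(G.erase t) := by
        apply Finset.card_image_iff.mp
        rw [hbad, hcardIcc, Finset.card_erase_of_mem ht, hc]
      have hv' : v ∈ G.erase t := Finset.mem_erase.mpr ⟨fun h => htv h.symm, hv⟩
      have hw' : w ∈ G.erase t := Finset.mem_erase.mpr ⟨fun h => htw h.symm, hw⟩
      exact absurd (hinjt hw' hv' hdw) hwv
    have hsub : ({v, w} : Finset (Vert n a)) ⊆ G := by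
      intro t ht
      rcases Finset.mem_insert.mp ht with rfl | ht
      · exact hv
      · exact (Finset.mem_singleton.mp ht) ▸ hw
    rw [← Finset.sum_subset hsub (fun t ht htn => by
      have h1 : t ≠ v := fun h => htn (by simp [h])
      have h2 : t ≠ w := fun h => htn (by simp [h])
      rw [hzero t ht h1 h2, mul_zero])]
    rw [Finset.sum_pair (fun h : v = w => hwv h.symm)]
    rw [phi, if_pos hgood, phi, if_pos hgoodw]
    have hm := master (k := k) (DD n a) G v w hv hw (fun h => hwv h.symm) hdw.symm honly
    rw [pow_add, pow_add] at hm
    rw [hm]; ring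
  · push_neg at hex
    apply Finset.sum_eq_zero
    intro v hv
    rw [phi, if_neg (hex v hv), mul_zero]

/-- The cochain `Φ` in degree `n-2` (faces with `n-1` vertices). -/
noncomputable def Phi (k : Type) [Field k] :
    Chains k (Vert n a) (deltaFace n a) ((n-2)+1) →ₗ[k] k :=
  Finsupp.lsum k fun F => LinearMap.toSpanSingleton k k (phi n a k F.1)

lemma Phi_single (k : Type) [Field k]
    (X : {F : Finset (Vert n a) // deltaFace n a F ∧ F.card = (n-2)+1}) (c : k) :
    Phi n a k (Finsupp.single X c) = c * phi n a k X.1 := by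
  rw [Phi, Finsupp.lsum_single, LinearMap.toSpanSingleton_apply, smul_eq_mul]

/-- `Φ` vanishes on boundaries. -/
lemma Phi_boundary (k : Type) [Field k] (hn : 2 ≤ n)
    (c : Chains k (Vert n a) (deltaFace n a) (((n-2)+1)+1)) :
    Phi n a k (boundary k (Vert n a) (deltaFace n a) (deltaFace_downClosed n a) ((n-2)+1) c)
      = 0 := by
  have h : (Phi n a k).comp
      (boundary k (Vert n a) (deltaFace n a) (deltaFace_downClosed n a) ((n-2)+1)) = 0 := by
    apply Finsupp.lhom_ext
    intro X b
    simp only [LinearMap.comp_apply, LinearMap.zero_apply]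
    rw [boundary_single, map_smul, map_sum]
    have hG : deltaFace n a X.1 := X.2.1
    have hGc : X.1.card = n := by have := X.2.2; omega
    have hk := key_sum n a k hn X.1 hG hGc
    rw [← Finset.sum_attach X.1
      (fun v => (-1:k)^(pos X.1 v) * phi n a k (X.1.erase v))] at hk
    simp only [pos] at hk
    simp only [map_smul, Phi_single, one_mul, smul_eq_mul]
    rw [hk, mul_zero]
  exact LinearMap.congr_fun h c

/-! ### The fundamental cycle -/

variable (ha : ∀ i, 1 ≤ a i)

/-- the vertex `y_{j,1}` -/
def yv (j : Fin n) : Vert n a := Sum.inr ⟨j, ⟨0, ha j⟩⟩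

omit [LinearOrder (Vert n a)] in
lemma yv_inj : Function.Injective (yv n a ha) := by
  intro i j h
  have h2 : (i : ℕ) = (j : ℕ) := congrArg (DD n a) h
  exact Fin.ext h2

/-- the set `Y = {y_{1,1},…,y_{n,1}}` -/
def YY : Finset (Vert n a) := Finset.univ.image (yv n a ha)

omit [LinearOrder (Vert n a)] in
lemma mem_YY (j : Fin n) : yv n a ha j ∈ YY n a ha :=
  Finset.mem_image_of_mem _ (Finset.mem_univ j)

omit [LinearOrder (Vert n a)] in
lemma card_YY : (YY n a ha).card = n := by
  rw [YY, Finset.card_image_of_injective _ (yv_inj n a ha), Finset.card_univ,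
    Fintype.card_fin]

omit [LinearOrder (Vert n a)] in
lemma face_YY_erase (j : Fin n) : deltaFace n a ((YY n a ha).erase (yv n a ha j)) := by
  refine ⟨j, ?_⟩
  intro t ht
  simp only [Finset.coe_erase, Set.mem_diff, Finset.mem_coe, Set.mem_singleton_iff] at ht
  obtain ⟨htY, htne⟩ := ht
  obtain ⟨m, _, hm⟩ := Finset.mem_image.mp htY
  right
  refine ⟨⟨m, ⟨0, ha m⟩⟩, fun hmj => htne ?_, hm⟩
  rw [← hm]
  exact congrArg (yv n a ha) hmj

omit [LinearOrder (Vert n a)] in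
lemma card_YY_erase (hn : 2 ≤ n) (j : Fin n) :
    ((YY n a ha).erase (yv n a ha j)).card = (n-2)+1 := by
  rw [Finset.card_erase_of_mem (mem_YY n a ha j), card_YY]
  omega

/-- The fundamental cycle `z = ∂[Y]` (formally). -/
noncomputable def zc (k : Type) [Field k] (hn : 2 ≤ n) :
    Chains k (Vert n a) (deltaFace n a) ((n-2)+1) :=
  ∑ j : Fin n, ((-1:k)^(pos (YY n a ha) (yv n a ha j))) •
    Finsupp.single
      (⟨(YY n a ha).erase (yv n a ha j), face_YY_erase n a ha j, card_YY_erase n a ha hn j⟩ :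
        {F : Finset (Vert n a) // deltaFace n a F ∧ F.card = (n-2)+1}) (1:k)

lemma Phi_zc_ne (k : Type) [Field k] (hn : 2 ≤ n) :
    Phi n a k (zc n a ha k hn) ≠ 0 := by
  have j0 : Fin n := ⟨0, by omega⟩
  rw [zc, map_sum]
  have hterm : ∀ j : Fin n,
      Phi n a k (((-1:k)^(pos (YY n a ha) (yv n a ha j))) •
        Finsupp.single
          (⟨(YY n a ha).erase (yv n a ha j), face_YY_erase n a ha j,
            card_YY_erase n a ha hn j⟩ :
            {F : Finset (Vert n a) // deltaFace n a F ∧ F.card = (n-2)+1}) (1:k))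
      = (-1:k)^(pos (YY n a ha) (yv n a ha j)) *
          phi n a k ((YY n a ha).erase (yv n a ha j)) := by
    intro j
    rw [map_smul, Phi_single, one_mul, smul_eq_mul]
  rw [Finset.sum_congr rfl (fun j _ => hterm j)]
  have hzero : ∀ j : Fin n, j ≠ ⟨0, by omega⟩ →
      phi n a k ((YY n a ha).erase (yv n a ha j)) = 0 := by
    intro j hj
    rw [phi, if_neg]
    intro hbad
    have h0 : (0:ℕ) ∈ ((YY n a ha).erase (yv n a ha j)).image (DD n a) := by
      refine Finset.mem_image.mpr ⟨yv n a ha ⟨0, by omega⟩, ?_, rfl⟩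
      exact Finset.mem_erase.mpr ⟨fun h => hj (yv_inj n a ha h).symm,
        mem_YY n a ha _⟩
    rw [hbad] at h0
    simp at h0
  have hone : phi n a k ((YY n a ha).erase (yv n a ha ⟨0, by omega⟩))
      = (-1:k)^(inversions (DD n a) ((YY n a ha).erase (yv n a ha ⟨0, by omega⟩))) := by
    rw [phi, if_pos]
    ext m
    simp only [Finset.mem_image, Finset.mem_erase, Finset.mem_Icc]
    constructor
    · rintro ⟨t, ⟨htne, htY⟩, rfl⟩
      obtain ⟨l, _, hl⟩ := Finset.mem_image.mp htY
      have hlne : l ≠ ⟨0, by omega⟩ := by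
        intro h; exact htne (by rw [← hl, h])
      have hl0 : (l : ℕ) ≠ 0 := fun h => hlne (Fin.ext h)
      have : DD n a t = (l : ℕ) := by rw [← hl]; rfl
      rw [this]
      exact ⟨by omega, by have := l.isLt; omega⟩
    · rintro ⟨h1, h2⟩
      refine ⟨yv n a ha ⟨m, by omega⟩, ⟨?_, mem_YY n a ha _⟩, rfl⟩
      intro h
      have := yv_inj n a ha h
      apply_fun (fun x => (x : ℕ)) at this
      simp at this
      omega
  rw [Finset.sum_eq_single (⟨0, by omega⟩ : Fin n)
    (fun j _ hj => by rw [hzero j hj, mul_zero])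
    (fun h => absurd (Finset.mem_univ _) h)]
  rw [hone, ← pow_add]
  intro hcon
  have : (-1:k) ≠ 0 := by norm_num
  exact (pow_ne_zero _ this) hcon

open Classical in
noncomputable def ee (k : Type) [Field k] (S : Finset (Vert n a)) :
    Chains k (Vert n a) (deltaFace n a) (n-2) :=
  if h : deltaFace n a S ∧ S.card = n-2 then Finsupp.single ⟨S, h⟩ 1 else 0

lemma ee_spec (k : Type) [Field k] (S : Finset (Vert n a)) (h1 : deltaFace n a S)
    (h2 : S.card = n-2) :
    (Finsupp.single (⟨S, h1, h2⟩ : {F : Finset (Vert n a) // deltaFace n a F ∧ F.card = n-2})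
      (1:k)) = ee n a k S := by
  rw [ee, dif_pos ⟨h1, h2⟩]

lemma boundary_zc (k : Type) [Field k] (hn : 2 ≤ n) :
    boundary k (Vert n a) (deltaFace n a) (deltaFace_downClosed n a) (n-2)
      (zc n a ha k hn) = 0 := by
  classical
  rw [zc, map_sum]
  have hstep : ∀ j : Fin n,
      boundary k (Vert n a) (deltaFace n a) (deltaFace_downClosed n a) (n-2)
        (Finsupp.single
          (⟨(YY n a ha).erase (yv n a ha j), face_YY_erase n a ha j,
            card_YY_erase n a ha hn j⟩ :
            {F : Finset (Vert n a) // deltaFace n a F ∧ F.card = (n-2)+1}) (1:k))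
      = ∑ v ∈ (YY n a ha).erase (yv n a ha j),
          ((-1:k)^(pos ((YY n a ha).erase (yv n a ha j)) v)) •
            ee n a k (((YY n a ha).erase (yv n a ha j)).erase v) := by
    intro j
    rw [boundary_single, one_smul]
    rw [← Finset.sum_attach ((YY n a ha).erase (yv n a ha j))
      (fun v => ((-1:k)^(pos ((YY n a ha).erase (yv n a ha j)) v)) •
        ee n a k (((YY n a ha).erase (yv n a ha j)).erase v))]
    refine Finset.sum_congr rfl (fun v _ => ?_)
    rw [ee_spec n a k _
      (deltaFace_downClosed n a _ _ (face_YY_erase n a ha j))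
      (by rw [Finset.card_erase_of_mem v.2, card_YY_erase n a ha hn j]; omega)]
    rfl
  have hreindex : ∀ j : Fin n,
      ((-1:k)^(pos (YY n a ha) (yv n a ha j))) • ∑ v ∈ (YY n a ha).erase (yv n a ha j),
          ((-1:k)^(pos ((YY n a ha).erase (yv n a ha j)) v)) •
            ee n a k (((YY n a ha).erase (yv n a ha j)).erase v)
      = ∑ m ∈ Finset.univ.erase j,
          ((-1:k)^(pos (YY n a ha) (yv n a ha j)
              + pos ((YY n a ha).erase (yv n a ha j)) (yv n a ha m))) •
            ee n a k (((YY n a ha).erase (yv n a ha j)).erase (yv n a ha m)) := by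
    intro j
    rw [Finset.smul_sum]
    have himg : (YY n a ha).erase (yv n a ha j)
        = (Finset.univ.erase j).image (yv n a ha) := by
      rw [Finset.image_erase (yv_inj n a ha), YY]
    rw [himg, Finset.sum_image (fun x _ y _ h => yv_inj n a ha h)]
    refine Finset.sum_congr rfl (fun m _ => ?_)
    rw [smul_smul, ← pow_add, ← himg]
  set H : Fin n × Fin n → Chains k (Vert n a) (deltaFace n a) (n-2) := fun p =>
    if p.1 = p.2 then 0 else
      ((-1:k)^(pos (YY n a ha) (yv n a ha p.1)
          + pos ((YY n a ha).erase (yv n a ha p.1)) (yv n a ha p.2))) •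
        ee n a k (((YY n a ha).erase (yv n a ha p.1)).erase (yv n a ha p.2)) with hH
  have hrw : ∀ j : Fin n,
      (∑ m ∈ Finset.univ.erase j,
        ((-1:k)^(pos (YY n a ha) (yv n a ha j)
            + pos ((YY n a ha).erase (yv n a ha j)) (yv n a ha m))) •
          ee n a k (((YY n a ha).erase (yv n a ha j)).erase (yv n a ha m)))
      = ∑ m : Fin n, H (j, m) := by
    intro j
    rw [← Finset.sum_erase Finset.univ (a := j) (f := fun m => H (j,m)) (by simp [hH])]
    refine Finset.sum_congr rfl (fun m hm => ?_)
    simp only [hH]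
    rw [if_neg (fun h => (Finset.mem_erase.mp hm).1 h.symm)]
  have hA : ∀ j : Fin n,
      boundary k (Vert n a) (deltaFace n a) (deltaFace_downClosed n a) (n-2)
        (((-1:k)^(pos (YY n a ha) (yv n a ha j))) •
          Finsupp.single
            (⟨(YY n a ha).erase (yv n a ha j), face_YY_erase n a ha j,
              card_YY_erase n a ha hn j⟩ :
              {F : Finset (Vert n a) // deltaFace n a F ∧ F.card = (n-2)+1}) (1:k))
      = ∑ m : Fin n, H (j, m) := by
    intro j
    rw [map_smul, hstep j, hreindex j, hrw j]
  rw [Finset.sum_congr rfl (fun j _ => hA j)]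
  rw [← Fintype.sum_prod_type]
  apply Finset.sum_ninvolution (g := Prod.swap)
  · intro p
    by_cases h : p.1 = p.2
    · simp [hH, h]
    · simp only [hH, Prod.fst_swap, Prod.snd_swap]
      rw [if_neg h, if_neg (fun hh => h hh.symm)]
      have hset : ((YY n a ha).erase (yv n a ha p.1)).erase (yv n a ha p.2)
          = ((YY n a ha).erase (yv n a ha p.2)).erase (yv n a ha p.1) :=
        Finset.erase_right_comm
      have hs := swap_sign (k := k) (YY n a ha) (yv n a ha p.1) (yv n a ha p.2)
        (mem_YY n a ha p.1) (mem_YY n a ha p.2)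
        (fun hh => h (yv_inj n a ha hh))
      rw [hset, hs, ← add_smul, neg_add_cancel, zero_smul]
  · intro p hp h
    exact hp (by simp only [hH]; rw [if_pos (show p.1 = p.2 from (congrArg Prod.fst h).symm)])
  · intro _; exact Finset.mem_univ _
  · intro p; exact Prod.swap_swap p

end Delta

/-- Let `Δ` be the simplicial complex whose facets are `F_i = {x_i} ∪ {y_{j,ℓ} : j ≠ i}`,
`i = 1,…,n`, with all `a i ≥ 1` and `n ≥ 2`.  Then the reduced simplicial homology
`H̃_{n-2}(Δ; k)` is nonzero, i.e. the boundaries form a proper submodule of the cycles in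
homological degree `n - 2`. -/
theorem stmt15 (k : Type) [Field k] (n : ℕ) (hn : 2 ≤ n) (a : Fin n → ℕ) (ha : ∀ i, 1 ≤ a i)
    [LinearOrder (Fin n ⊕ Σ i : Fin n, Fin (a i))] :
    LinearMap.range (boundary k (Fin n ⊕ Σ i : Fin n, Fin (a i)) (deltaFace n a)
        (deltaFace_downClosed n a) ((n - 2) + 1)) ≠
      LinearMap.ker (boundary k (Fin n ⊕ Σ i : Fin n, Fin (a i)) (deltaFace n a)
        (deltaFace_downClosed n a) (n - 2)) := by
  intro heq
  have hzker : zc n a ha k hn ∈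
      LinearMap.ker (boundary k (Fin n ⊕ Σ i : Fin n, Fin (a i)) (deltaFace n a)
        (deltaFace_downClosed n a) (n - 2)) :=
    LinearMap.mem_ker.mpr (boundary_zc n a ha k hn)
  rw [← heq] at hzker
  obtain ⟨g, hg⟩ := hzker
  have h0 : Phi n a k (zc n a ha k hn) = 0 := by
    rw [← hg]
    exact Phi_boundary n a k hn g
  exact Phi_zc_ne n a ha k hn h0
end
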